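/- arXiv:0907.1980 — 7 statements merged into one kernel-verified Lean document; each statement's English description precedes it below -/
import Mathlib

section
/- Every isolated point of the structured ε-pseudospectrum Λ_{S,ε}(A) is an eigenvalue of A. -/
open Matrix Polynomial Set

noncomputable def MS {n : ℕ} (S : Finset (Fin n × Fin n))
    (z : EuclideanSpace ℂ {p : Fin n × Fin n // p ∈ S}) : Matrix (Fin n) (Fin n) ℂ :=
  fun i j => if h : (i, j) ∈ S then z ⟨(i, j), h⟩ else 0

/-- The structured ε-pseudospectrum `Λ_{S,ε}(A)`. -/
noncomputable def structPseudo {n : ℕ} (A : Matrix (Fin n) (Fin n) ℂ)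
    (S : Finset (Fin n × Fin n)) (ε : ℝ) : Set ℂ :=
  ⋃ z ∈ {z : EuclideanSpace ℂ {p : Fin n × Fin n // p ∈ S} | ‖z‖ ≤ ε},
    spectrum ℂ (A + MS S z)

/-- The strict structured ε-pseudospectrum `Λ'_{S,ε}(A)`. -/
noncomputable def structPseudoStrict {n : ℕ} (A : Matrix (Fin n) (Fin n) ℂ)
    (S : Finset (Fin n × Fin n)) (ε : ℝ) : Set ℂ :=
  ⋃ z ∈ {z : EuclideanSpace ℂ {p : Fin n × Fin n // p ∈ S} | ‖z‖ < ε},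
    spectrum ℂ (A + MS S z)

lemma MS_smul {n : ℕ} (S : Finset (Fin n × Fin n)) (c : ℂ)
    (z : EuclideanSpace ℂ {p : Fin n × Fin n // p ∈ S}) :
    MS S (c • z) = c • MS S z := by
  funext i j
  simp only [MS, Matrix.smul_apply]
  split <;> simp

lemma MS_zero {n : ℕ} (S : Finset (Fin n × Fin n)) :
    MS S (0 : EuclideanSpace ℂ {p : Fin n × Fin n // p ∈ S}) = 0 := by
  funext i j
  simp only [MS]
  split <;> simp

lemma eval_charpoly' {n : ℕ} (M : Matrix (Fin n) (Fin n) ℂ) (μ : ℂ) :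
    (M.charpoly).eval μ = (μ • (1 : Matrix (Fin n) (Fin n) ℂ) - M).det := by
  rw [Matrix.charpoly, ← Polynomial.coe_evalRingHom, RingHom.map_det]
  congr 1
  ext i j
  by_cases h : i = j <;>
    simp [Matrix.charmatrix_apply, Matrix.one_apply, h, Matrix.diagonal_apply]

lemma mem_spec_iff {n : ℕ} (M : Matrix (Fin n) (Fin n) ℂ) (μ : ℂ) :
    μ ∈ spectrum ℂ M ↔ (μ • (1 : Matrix (Fin n) (Fin n) ℂ) - M).det = 0 := by
  rw [spectrum.mem_iff, Matrix.isUnit_iff_isUnit_det, isUnit_iff_ne_zero, not_ne_iff,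
    Algebra.algebraMap_eq_smul_one]

/-- Every isolated point of the structured ε-pseudospectrum is an eigenvalue of A. -/
theorem isolated_point_mem_spectrum {n : ℕ} (A : Matrix (Fin n) (Fin n) ℂ)
    (S : Finset (Fin n × Fin n)) (ε : ℝ) (hε : 0 < ε) (lam : ℂ)
    (hmem : lam ∈ structPseudo A S ε)
    (hiso : ∃ U ∈ nhds lam, U ∩ structPseudo A S ε = {lam}) :
    lam ∈ spectrum ℂ A := by
  rw [structPseudo, Set.mem_iUnion₂] at hmem
  obtain ⟨z, hz, hlam⟩ := hmem
  obtain ⟨U, hU, hUint⟩ := hiso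
  obtain ⟨δ, hδ, hball⟩ := Metric.mem_nhds_iff.mp hU
  set δ' : ℝ := min δ 1 with hδ'def
  have hδ' : 0 < δ' := lt_min hδ one_pos
  set M := MS S z with hM
  set f : ℝ → ℂ := fun t => (lam • (1 : Matrix (Fin n) (Fin n) ℂ) - (A + (t : ℂ) • M)).det
    with hf
  have hcont : Continuous f := by
    apply Continuous.matrix_det
    fun_prop
  -- spectrum of the interpolated matrices lies in the pseudospectrum
  have hspec : ∀ t ∈ Icc (0:ℝ) 1, spectrum ℂ (A + (t : ℂ) • M) ⊆ structPseudo A S ε := by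
    intro t ht μ hμ
    rw [structPseudo, Set.mem_iUnion₂]
    refine ⟨(t : ℂ) • z, ?_, ?_⟩
    · have : ‖(t : ℂ) • z‖ = |t| * ‖z‖ := by
        rw [norm_smul, Complex.norm_real, Real.norm_eq_abs]
      simp only [Set.mem_setOf_eq, this]
      calc |t| * ‖z‖ ≤ 1 * ε := by
            apply mul_le_mul _ hz (norm_nonneg z) zero_le_one
            rw [abs_le]; exact ⟨by linarith [ht.1], ht.2⟩
        _ = ε := one_mul ε
    · rwa [MS_smul]
  -- dichotomy
  have key : ∀ t ∈ Icc (0:ℝ) 1, f t = 0 ∨ δ' ^ n ≤ ‖f t‖ := by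
    intro t ht
    set B := A + (t : ℂ) • M with hB
    set p := B.charpoly with hp
    have hmonic : p.Monic := B.charpoly_monic
    have hsplit : p.Splits := IsAlgClosed.splits p
    have hcard : Multiset.card p.roots = n := by
      rw [Polynomial.splits_iff_card_roots.mp hsplit, Matrix.charpoly_natDegree_eq_dim,
        Fintype.card_fin]
    have hfeval : f t = p.eval lam := by rw [eval_charpoly']
    by_cases hroot : p.IsRoot lam
    · left; rw [hfeval]; exact hroot
    · right
      have hfac : ∀ r ∈ p.roots, δ' ≤ ‖lam - r‖ := by
        intro r hr
        have hrs : r ∈ spectrum ℂ B := by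
          rw [mem_spec_iff, ← eval_charpoly']
          exact (Polynomial.isRoot_of_mem_roots hr)
        have hrΛ : r ∈ structPseudo A S ε := hspec t ht hrs
        have hrne : r ≠ lam := by
          rintro rfl; exact hroot (Polynomial.isRoot_of_mem_roots hr)
        by_contra hlt
        push_neg at hlt
        have hrU : r ∈ U := hball (by
          rw [Metric.mem_ball, dist_eq_norm, ← norm_neg, neg_sub]
          exact lt_of_lt_of_le hlt (min_le_left _ _))
        have : r ∈ ({lam} : Set ℂ) := hUint ▸ ⟨hrU, hrΛ⟩
        exact hrne this
      have hprod : p = (p.roots.map fun a => X - C a).prod :=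
        hsplit.eq_prod_roots_of_monic hmonic
      have heval : ‖f t‖ = ((p.roots.map fun a => ‖lam - a‖)).prod := by
        rw [hfeval]
        conv_lhs => rw [hprod]
        rw [Polynomial.eval_multiset_prod, ← normHom_apply, map_multiset_prod,
          Multiset.map_map, Multiset.map_map]
        apply congrArg
        apply Multiset.map_congr rfl
        intro a _
        simp [normHom_apply]
      rw [heval, ← hcard]
      -- lower bound the product
      have : ∀ m : Multiset ℝ, (∀ x ∈ m, δ' ≤ x) → δ' ^ Multiset.card m ≤ m.prod := by
        intro m
        induction m using Multiset.induction with
        | empty => simp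
        | cons a s ih =>
          intro h
          rw [Multiset.prod_cons, Multiset.card_cons, pow_succ']
          exact mul_le_mul (h a (Multiset.mem_cons_self a s))
            (ih fun x hx => h x (Multiset.mem_cons_of_mem hx))
            (pow_nonneg hδ'.le _) (hδ'.le.trans (h a (Multiset.mem_cons_self a s)))
      have hb := this (p.roots.map fun a => ‖lam - a‖) (by
        intro x hx
        obtain ⟨r, hr, rfl⟩ := Multiset.mem_map.mp hx
        exact hfac r hr)
      rwa [Multiset.card_map] at hb
  -- the infimum argument
  set T : Set ℝ := Icc (0:ℝ) 1 ∩ f ⁻¹' {0} with hT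
  have h1T : (1:ℝ) ∈ T := by
    constructor
    · exact ⟨zero_le_one, le_refl 1⟩
    · simp only [Set.mem_preimage, Set.mem_singleton_iff]
      have : A + ((1:ℝ) : ℂ) • M = A + MS S z := by
        rw [hM, Complex.ofReal_one, one_smul]
      rw [hf]
      simp only
      rw [this, ← mem_spec_iff]
      exact hlam
  have hTc : IsClosed T := isClosed_Icc.inter (isClosed_singleton.preimage hcont)
  have hbdd : BddBelow T := ⟨0, fun t ht => ht.1.1⟩
  have hne : T.Nonempty := ⟨1, h1T⟩
  set t₀ := sInf T with ht₀def
  have ht₀T : t₀ ∈ T := hTc.csInf_mem hne hbdd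
  have ht₀0 : t₀ = 0 := by
    by_contra hzero
    have hpos : 0 < t₀ := lt_of_le_of_ne ht₀T.1.1 (Ne.symm hzero)
    obtain ⟨η, hη, hclose⟩ := Metric.continuous_iff.mp hcont t₀ (δ' ^ n) (pow_pos hδ' n)
    set s := max 0 (t₀ - η / 2) with hs
    have hs0 : 0 ≤ s := le_max_left _ _
    have hst : s < t₀ := max_lt hpos (by linarith)
    have hs1 : s ≤ 1 := hst.le.trans ht₀T.1.2
    have hdist : dist s t₀ < η := by
      rw [Real.dist_eq, abs_sub_lt_iff]
      constructor
      · linarith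
      · have : t₀ - η / 2 ≤ s := le_max_right _ _
        linarith
    have hfs : ‖f s‖ < δ' ^ n := by
      have := hclose s hdist
      have hft₀ : f t₀ = 0 := ht₀T.2
      rwa [dist_eq_norm, hft₀, sub_zero] at this
    have hfs0 : f s = 0 := by
      rcases key s ⟨hs0, hs1⟩ with h | h
      · exact h
      · linarith
    have : t₀ ≤ s := csInf_le hbdd ⟨⟨hs0, hs1⟩, hfs0⟩
    linarith
  have hf0 : f 0 = 0 := ht₀0 ▸ ht₀T.2
  rw [hf] at hf0
  simp only [Complex.ofReal_zero, zero_smul, add_zero] at hf0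
  rw [mem_spec_iff]
  exact hf0
end

section
/- Let f be a monic complex polynomial of degree n ≥ 1 with r distinct roots. Then the nullity of the Sylvester resultant matrix R(f, f') of f and its derivative f' equals n − r. Equivalently, the number of distinct roots of f is n − ν(R(f,f')). -/
open Polynomial Matrix Finset

/-- The Sylvester resultant matrix `R(f, f')` of a monic polynomial `f` of degree `n` and its
derivative: a `(2n-1) × (2n-1)` matrix whose first `n-1` rows are the shifted coefficient rows
of `f` and whose last `n` rows are the shifted coefficient rows of `f'`. -/
noncomputable def sylvFf' (n : ℕ) (f : Polynomial ℂ) :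
    Matrix (Fin (2 * n - 1)) (Fin (2 * n - 1)) ℂ := fun i j =>
  if (i : ℕ) < n - 1 then
    -- row of `f` starting at column `i`: entries `f.coeff (n - (j - i))` for `i ≤ j ≤ i + n`
    (if (i : ℕ) ≤ (j : ℕ) ∧ (j : ℕ) ≤ (i : ℕ) + n then f.coeff (n - ((j : ℕ) - (i : ℕ))) else 0)
  else
    -- row of `f'` starting at column `i - (n-1)`
    (let i' := (i : ℕ) - (n - 1)
     if i' ≤ (j : ℕ) ∧ (j : ℕ) ≤ i' + (n - 1) then
       (Polynomial.derivative f).coeff ((n - 1) - ((j : ℕ) - i')) else 0)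

private lemma gcd_deg_aux {n : ℕ} (hn : 1 ≤ n) (f : Polynomial ℂ) (hf : f.Monic)
    (hdeg : f.natDegree = n) :
    (GCDMonoid.gcd f (derivative f)).natDegree + f.roots.toFinset.card = n := by
  classical
  have hf0 : f ≠ 0 := hf.ne_zero
  have hdegf' : (derivative f).degree = ((n - 1 : ℕ) : WithBot ℕ) := by
    simpa [hdeg] using degree_derivative_eq f (by omega)
  have hf'0 : derivative f ≠ 0 := by
    intro h; rw [h, degree_zero] at hdegf'; exact (by simp at hdegf')
  set g := GCDMonoid.gcd f (derivative f) with hgdef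
  have hg0 : g ≠ 0 := fun h => hf0 ((gcd_eq_zero_iff f (derivative f)).1 h).1
  have hrm : ∀ z : ℂ, rootMultiplicity z g = rootMultiplicity z f - 1 := by
    intro z
    by_cases hz : IsRoot f z
    · refine le_antisymm ?_ ?_
      · have h1 : rootMultiplicity z g ≤ rootMultiplicity z (derivative f) :=
          (le_rootMultiplicity_iff hf'0).2
            ((pow_rootMultiplicity_dvd g z).trans (gcd_dvd_right f (derivative f)))
        rwa [derivative_rootMultiplicity_of_root hz] at h1
      · refine (le_rootMultiplicity_iff hg0).2 (dvd_gcd ?_ ?_)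
        · exact (pow_dvd_pow _ (Nat.sub_le _ _)).trans (pow_rootMultiplicity_dvd f z)
        · exact (derivative_rootMultiplicity_of_root hz) ▸
            pow_rootMultiplicity_dvd (derivative f) z
    · have h0 : rootMultiplicity z f = 0 := rootMultiplicity_eq_zero hz
      have h1 : rootMultiplicity z g ≤ rootMultiplicity z f :=
        (le_rootMultiplicity_iff hf0).2
          ((pow_rootMultiplicity_dvd g z).trans (gcd_dvd_left f (derivative f)))
      omega
  have hsplitsf : Multiset.card f.roots = n := by
    rw [splits_iff_card_roots.1 (IsAlgClosed.splits f), hdeg]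
  have hsplitsg : Multiset.card g.roots = g.natDegree :=
    splits_iff_card_roots.1 (IsAlgClosed.splits g)
  have hsub : g.roots.toFinset ⊆ f.roots.toFinset := by
    intro z hz
    rw [Multiset.mem_toFinset, mem_roots hg0] at hz
    rw [Multiset.mem_toFinset, mem_roots hf0]
    exact hz.dvd (gcd_dvd_left f (derivative f))
  have hsum : g.natDegree = ∑ z ∈ f.roots.toFinset, (rootMultiplicity z f - 1) := by
    rw [← hsplitsg, ← Multiset.toFinset_sum_count_eq]
    have hstep : ∑ z ∈ g.roots.toFinset, Multiset.count z g.roots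
        = ∑ z ∈ g.roots.toFinset, (rootMultiplicity z f - 1) :=
      Finset.sum_congr rfl fun z _ => by rw [count_roots, hrm]
    rw [hstep]
    refine Finset.sum_subset hsub fun z _ hzg => ?_
    rw [← hrm z, ← count_roots]
    exact Multiset.count_eq_zero.2 fun hm => hzg (Multiset.mem_toFinset.2 hm)
  rw [hsum]
  have h2 : ∑ z ∈ f.roots.toFinset, (rootMultiplicity z f - 1) + f.roots.toFinset.card
      = ∑ z ∈ f.roots.toFinset, rootMultiplicity z f := by
    rw [Finset.card_eq_sum_ones, ← Finset.sum_add_distrib]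
    refine Finset.sum_congr rfl fun z hz => ?_
    have h1 : 1 ≤ rootMultiplicity z f := by
      rw [← count_roots]
      exact Multiset.one_le_count_iff_mem.2 (Multiset.mem_toFinset.1 hz)
    omega
  rw [h2]
  have h3 : ∑ z ∈ f.roots.toFinset, rootMultiplicity z f = Multiset.card f.roots := by
    rw [← Multiset.toFinset_sum_count_eq]
    exact Finset.sum_congr rfl fun z _ => by rw [count_roots]
  rw [h3, hsplitsf]

private lemma sylv_ker_finrank {n : ℕ} (hn : 1 ≤ n) (f : Polynomial ℂ) (hf : f.Monic)
    (hdeg : f.natDegree = n) :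
    Module.finrank ℂ (LinearMap.ker (Matrix.mulVecLin (sylvFf' n f)ᵀ))
      = (GCDMonoid.gcd f (derivative f)).natDegree := by
  classical
  have hf0 : f ≠ 0 := hf.ne_zero
  have hdegf' : (derivative f).degree = ((n - 1 : ℕ) : WithBot ℕ) := by
    simpa [hdeg] using degree_derivative_eq f (by omega)
  have hf'0 : derivative f ≠ 0 := by
    intro h; rw [h, degree_zero] at hdegf'; exact (by simp at hdegf')
  have hnf' : (derivative f).natDegree = n - 1 := natDegree_eq_of_degree_eq_some hdegf'
  set g := GCDMonoid.gcd f (derivative f) with hgdef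
  set k := g.natDegree with hkdef
  have hg0 : g ≠ 0 := fun h => hf0 ((gcd_eq_zero_iff f (derivative f)).1 h).1
  set f1 := f / g with hf1def
  set g1 := derivative f / g with hg1def
  have hgf : g * f1 = f := EuclideanDomain.mul_div_cancel' hg0 (gcd_dvd_left f (derivative f))
  have hgf' : g * g1 = derivative f :=
    EuclideanDomain.mul_div_cancel' hg0 (gcd_dvd_right f (derivative f))
  have hcop : IsCoprime f1 g1 := isCoprime_div_gcd_div_gcd hf'0
  have hf10 : f1 ≠ 0 := fun h => hf0 (by rw [← hgf, h, mul_zero])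
  have hg10 : g1 ≠ 0 := fun h => hf'0 (by rw [← hgf', h, mul_zero])
  have hkn : k ≤ n - 1 := hnf' ▸ natDegree_le_of_dvd (gcd_dvd_right f (derivative f)) hf'0
  have hdg1 : g1.natDegree = n - 1 - k := by
    have h := natDegree_mul hg0 hg10
    rw [hgf', hnf'] at h
    omega
  have hdf1 : f1.natDegree = n - k := by
    have h := natDegree_mul hg0 hf10
    rw [hgf, hdeg] at h
    have : k ≤ n - 1 := hkn
    omega
  set N := 2 * n - 1 with hN
  set μ : ℕ → Polynomial ℂ := fun i => if i < n - 1 then f * X ^ (n - 2 - i)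
      else derivative f * X ^ (n - 1 - (i - (n - 1))) with hμ
  have hμdeg : ∀ i, (μ i).natDegree ≤ 2 * n - 2 := by
    intro i
    rw [hμ]; dsimp only
    split_ifs with h
    · refine natDegree_mul_le.trans ?_
      rw [hdeg, natDegree_X_pow]; omega
    · refine natDegree_mul_le.trans ?_
      rw [hnf', natDegree_X_pow]; omega
  have hentry : ∀ (i j : Fin N), (μ (i : ℕ)).coeff (2 * n - 2 - (j : ℕ)) = sylvFf' n f i j := by
    intro i j
    have hiN : (i : ℕ) < 2 * n - 1 := i.isLt
    have hjN : (j : ℕ) < 2 * n - 1 := j.isLt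
    rw [hμ]
    simp only [sylvFf']
    by_cases hi : (i : ℕ) < n - 1
    · rw [if_pos hi, if_pos hi, coeff_mul_X_pow']
      by_cases hc : (i : ℕ) ≤ (j : ℕ) ∧ (j : ℕ) ≤ (i : ℕ) + n
      · rw [if_pos hc, if_pos (by omega)]
        congr 1
        omega
      · rw [if_neg hc]
        by_cases hji : (j : ℕ) < (i : ℕ)
        · rw [if_pos (by omega)]
          apply coeff_eq_zero_of_natDegree_lt
          rw [hdeg]; omega
        · rw [if_neg (by omega)]
    · rw [if_neg hi, if_neg hi, coeff_mul_X_pow']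
      by_cases hc : (i : ℕ) - (n - 1) ≤ (j : ℕ) ∧ (j : ℕ) ≤ (i : ℕ) - (n - 1) + (n - 1)
      · rw [if_pos hc, if_pos (by omega)]
        congr 1
        omega
      · rw [if_neg hc]
        by_cases hji : (j : ℕ) < (i : ℕ) - (n - 1)
        · rw [if_pos (by omega)]
          apply coeff_eq_zero_of_natDegree_lt
          rw [hnf']; omega
        · rw [if_neg (by omega)]
  set Aof : (ℕ → ℂ) → Polynomial ℂ :=
    fun w => ∑ e ∈ range (n - 1), C (w (n - 2 - e)) * X ^ e with hAof
  set Bof : (ℕ → ℂ) → Polynomial ℂ :=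
    fun w => ∑ e ∈ range n, C (w (n - 1 + (n - 1 - e))) * X ^ e with hBof
  have hkey : ∀ w : ℕ → ℂ,
      ∑ i ∈ range N, w i • μ i = Aof w * f + Bof w * derivative f := by
    intro w
    rw [show N = (n - 1) + n by omega, Finset.sum_range_add]
    congr 1
    · rw [hAof]; dsimp only
      rw [Finset.sum_mul, ← Finset.sum_range_reflect (fun i => w i • μ i) (n - 1)]
      refine Finset.sum_congr rfl fun e he => ?_
      rw [Finset.mem_range] at he
      rw [show n - 1 - 1 - e = n - 2 - e by omega]
      rw [hμ]; dsimp only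
      rw [if_pos (by omega : n - 2 - e < n - 1), smul_eq_C_mul,
        show n - 2 - (n - 2 - e) = e by omega]
      ring
    · rw [hBof]; dsimp only
      rw [Finset.sum_mul, ← Finset.sum_range_reflect
        (fun e => C (w (n - 1 + (n - 1 - e))) * X ^ e * derivative f) n]
      refine Finset.sum_congr rfl fun t ht => ?_
      rw [Finset.mem_range] at ht
      rw [hμ]; dsimp only
      rw [if_neg (by omega : ¬ n - 1 + t < n - 1), show n - 1 + t - (n - 1) = t by omega,
        smul_eq_C_mul, show n - 1 - (n - 1 - t) = t by omega]
      ring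
  have hAcoeff : ∀ (w : ℕ → ℂ) i, i < n - 1 → (Aof w).coeff (n - 2 - i) = w i := by
    intro w i hi
    rw [hAof]; dsimp only
    rw [finset_sum_coeff, Finset.sum_eq_single (n - 2 - i)]
    · rw [coeff_C_mul, coeff_X_pow, if_pos rfl, mul_one, show n - 2 - (n - 2 - i) = i by omega]
    · intro b _ hne
      rw [coeff_C_mul, coeff_X_pow, if_neg (fun h => hne h.symm), mul_zero]
    · intro h
      exact absurd (Finset.mem_range.2 (by omega)) h
  have hBcoeff : ∀ (w : ℕ → ℂ) i', i' ≤ n - 1 → (Bof w).coeff (n - 1 - i') = w (n - 1 + i') := by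
    intro w i' hi'
    rw [hBof]; dsimp only
    rw [finset_sum_coeff, Finset.sum_eq_single (n - 1 - i')]
    · rw [coeff_C_mul, coeff_X_pow, if_pos rfl, mul_one,
        show n - 1 - (n - 1 - i') = i' by omega]
    · intro b _ hne
      rw [coeff_C_mul, coeff_X_pow, if_neg (fun h => hne h.symm), mul_zero]
    · intro h
      exact absurd (Finset.mem_range.2 (by omega)) h
  have hAmem : ∀ w, Aof w ∈ degreeLT ℂ (n - 1) := by
    intro w
    refine Submodule.sum_mem _ fun e he => ?_
    refine mem_degreeLT.2 (lt_of_le_of_lt (degree_C_mul_X_pow_le e _) ?_)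
    exact_mod_cast Finset.mem_range.1 he
  -- extension of a vector to ℕ
  set wv : (Fin N → ℂ) → (ℕ → ℂ) :=
    fun v m => if h : m < N then v ⟨m, h⟩ else 0 with hwv
  have hwv_eq : ∀ (v : Fin N → ℂ) (i : Fin N), wv v (i : ℕ) = v i := by
    intro v i
    rw [hwv]; dsimp only
    rw [dif_pos i.isLt]
  have hmv : ∀ (v : Fin N → ℂ) (j : Fin N),
      ((sylvFf' n f)ᵀ *ᵥ v) j
        = (Aof (wv v) * f + Bof (wv v) * derivative f).coeff (2 * n - 2 - (j : ℕ)) := by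
    intro v j
    have h1 : ((sylvFf' n f)ᵀ *ᵥ v) j = ∑ i : Fin N, v i * sylvFf' n f i j := by
      simp only [Matrix.mulVec, dotProduct, Matrix.transpose_apply]
      exact Finset.sum_congr rfl fun i _ => mul_comm _ _
    rw [h1, ← hkey, finset_sum_coeff,
      ← Fin.sum_univ_eq_sum_range (fun i => (wv v i • μ i).coeff (2 * n - 2 - (j : ℕ))) N]
    refine Finset.sum_congr rfl fun i _ => ?_
    rw [coeff_smul, smul_eq_mul, hentry i j, hwv_eq]
  have hker : ∀ v : Fin N → ℂ,
      v ∈ LinearMap.ker ((sylvFf' n f)ᵀ.mulVecLin)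
        ↔ Aof (wv v) * f + Bof (wv v) * derivative f = 0 := by
    intro v
    rw [LinearMap.mem_ker, mulVecLin_apply]
    constructor
    · intro h
      ext m
      rw [coeff_zero]
      by_cases hm : m ≤ 2 * n - 2
      · have h2 := congrFun h ⟨2 * n - 2 - m, by omega⟩
        rw [hmv] at h2
        simpa [show 2 * n - 2 - (2 * n - 2 - m) = m by omega] using h2
      · rw [← hkey, finset_sum_coeff]
        refine Finset.sum_eq_zero fun i _ => ?_
        rw [coeff_smul, coeff_eq_zero_of_natDegree_lt (lt_of_le_of_lt (hμdeg i) (by omega)),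
          smul_zero]
    · intro h
      funext j
      rw [hmv v j, h, coeff_zero]
      rfl
  -- the parametrizing linear map
  set ψfun : Polynomial ℂ → (Fin N → ℂ) := fun c i =>
    if (i : ℕ) < n - 1 then (c * g1).coeff (n - 2 - (i : ℕ))
    else (-(c * f1)).coeff (n - 1 - ((i : ℕ) - (n - 1))) with hψfun
  set ψ : degreeLT ℂ k →ₗ[ℂ] (Fin N → ℂ) :=
    { toFun := fun c => ψfun c.1
      map_add' := by
        intro c d
        funext i
        show ψfun (c + d : degreeLT ℂ k).1 i = ψfun c.1 i + ψfun d.1 i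
        rw [hψfun]; dsimp only
        by_cases h : (i : ℕ) < n - 1 <;>
          simp [h, add_mul, coeff_add, Pi.add_apply, neg_add] <;> ring
      map_smul' := by
        intro a c
        funext i
        show ψfun (a • c : degreeLT ℂ k).1 i = a • ψfun c.1 i
        rw [hψfun]; dsimp only
        by_cases h : (i : ℕ) < n - 1 <;>
          simp [h, smul_mul_assoc, coeff_smul, coeff_neg, Pi.smul_apply, smul_eq_mul,
            mul_neg] } with hψ
  have hψapp : ∀ (c : degreeLT ℂ k) (i : Fin N), ψ c i = ψfun c.1 i := fun _ _ => rfl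
  -- injectivity
  have hψinj : Function.Injective ψ := by
    rw [← LinearMap.ker_eq_bot]
    refine LinearMap.ker_eq_bot'.2 fun c hc0 => ?_
    by_cases hc : (c : Polynomial ℂ) = 0
    · exact Subtype.ext hc
    exfalso
    have hdc : (c : Polynomial ℂ).natDegree < k :=
      (natDegree_lt_iff_degree_lt hc).2 (mem_degreeLT.1 c.2)
    have hcf1 : (c : Polynomial ℂ) * f1 = 0 := by
      ext m
      rw [coeff_zero]
      by_cases hm : m ≤ n - 1
      · have h2 := congrFun hc0 ⟨n - 1 + (n - 1 - m), by omega⟩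
        rw [hψapp, hψfun] at h2
        dsimp only at h2
        rw [if_neg (by omega)] at h2
        simp only [show n - 1 - ((n - 1 + (n - 1 - m)) - (n - 1)) = m by omega, coeff_neg,
          Pi.zero_apply, neg_eq_zero] at h2
        exact h2
      · apply coeff_eq_zero_of_natDegree_lt
        have := natDegree_mul hc hf10
        omega
    exact hc ((mul_eq_zero.1 hcf1).resolve_right hf10)
  -- range ψ = kernel
  have hrange : LinearMap.range ψ = LinearMap.ker ((sylvFf' n f)ᵀ.mulVecLin) := by
    ext v
    simp only [LinearMap.mem_range]
    constructor
    · rintro ⟨c, rfl⟩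
      rw [hker]
      have hA' : Aof (wv (ψ c)) = (c : Polynomial ℂ) * g1 := by
        by_cases hcg : (c : Polynomial ℂ) * g1 = 0
        · rw [hcg, hAof]; dsimp only
          refine Finset.sum_eq_zero fun e he => ?_
          rw [Finset.mem_range] at he
          rw [hwv]; dsimp only
          rw [dif_pos (by omega : n - 2 - e < N)]
          rw [hψapp, hψfun]; dsimp only
          rw [if_pos (by omega), show n - 2 - (n - 2 - e) = e by omega, hcg,
            coeff_zero, map_zero, zero_mul]
        · have hc0 : (c : Polynomial ℂ) ≠ 0 := fun h => hcg (by rw [h, zero_mul])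
          have hdc : (c : Polynomial ℂ).natDegree < k :=
            (natDegree_lt_iff_degree_lt hc0).2 (mem_degreeLT.1 c.2)
          have hk1 : 1 ≤ k := by omega
          have hdcg : ((c : Polynomial ℂ) * g1).natDegree < n - 1 := by
            rw [natDegree_mul hc0 hg10, hdg1]; omega
          rw [as_sum_range' _ _ hdcg, hAof]; dsimp only
          refine Finset.sum_congr rfl fun e he => ?_
          rw [Finset.mem_range] at he
          rw [hwv]; dsimp only
          rw [dif_pos (by omega : n - 2 - e < N)]
          rw [hψapp, hψfun]; dsimp only
          rw [if_pos (by omega), show n - 2 - (n - 2 - e) = e by omega,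
            C_mul_X_pow_eq_monomial]
      have hB' : Bof (wv (ψ c)) = -((c : Polynomial ℂ) * f1) := by
        by_cases hcf : (c : Polynomial ℂ) * f1 = 0
        · rw [hcf, neg_zero, hBof]; dsimp only
          refine Finset.sum_eq_zero fun e he => ?_
          rw [Finset.mem_range] at he
          rw [hwv]; dsimp only
          rw [dif_pos (by omega : n - 1 + (n - 1 - e) < N)]
          rw [hψapp, hψfun]; dsimp only
          rw [if_neg (by omega),
            show n - 1 - ((n - 1 + (n - 1 - e)) - (n - 1)) = e by omega, hcf, neg_zero,
            coeff_zero, map_zero, zero_mul]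
        · have hc0 : (c : Polynomial ℂ) ≠ 0 := fun h => hcf (by rw [h, zero_mul])
          have hdc : (c : Polynomial ℂ).natDegree < k :=
            (natDegree_lt_iff_degree_lt hc0).2 (mem_degreeLT.1 c.2)
          have hdcf : (-((c : Polynomial ℂ) * f1)).natDegree < n := by
            rw [natDegree_neg, natDegree_mul hc0 hf10, hdf1]; omega
          rw [as_sum_range' _ _ hdcf, hBof]; dsimp only
          refine Finset.sum_congr rfl fun e he => ?_
          rw [Finset.mem_range] at he
          rw [hwv]; dsimp only
          rw [dif_pos (by omega : n - 1 + (n - 1 - e) < N)]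
          rw [hψapp, hψfun]; dsimp only
          rw [if_neg (by omega),
            show n - 1 - ((n - 1 + (n - 1 - e)) - (n - 1)) = e by omega,
            C_mul_X_pow_eq_monomial]
      rw [hA', hB']
      linear_combination ((c : Polynomial ℂ) * f1) * hgf' - ((c : Polynomial ℂ) * g1) * hgf
    · intro hv
      have heq : Aof (wv v) * f + Bof (wv v) * derivative f = 0 := (hker v).1 hv
      have heq2 : Aof (wv v) * f1 + Bof (wv v) * g1 = 0 := by
        have h0 : g * (Aof (wv v) * f1 + Bof (wv v) * g1) = 0 := by
          linear_combination heq + Aof (wv v) * hgf + Bof (wv v) * hgf'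
        exact (mul_eq_zero.1 h0).resolve_left hg0
      have hdvd : g1 ∣ Aof (wv v) := by
        refine hcop.symm.dvd_of_dvd_mul_right ⟨-(Bof (wv v)), ?_⟩
        linear_combination heq2
      obtain ⟨c, hc⟩ := hdvd
      have hBc : Bof (wv v) = -(c * f1) := by
        have h0 : g1 * (c * f1 + Bof (wv v)) = 0 := by
          linear_combination heq2 - f1 * hc
        exact eq_neg_of_add_eq_zero_right ((mul_eq_zero.1 h0).resolve_left hg10)
      have hcmem : c ∈ degreeLT ℂ k := by
        rw [mem_degreeLT]
        by_cases hc0 : c = 0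
        · rw [hc0, degree_zero]
          exact WithBot.bot_lt_coe _
        · have hA0 : Aof (wv v) ≠ 0 := by rw [hc]; exact mul_ne_zero hg10 hc0
          have hlt : (Aof (wv v)).natDegree < n - 1 :=
            (natDegree_lt_iff_degree_lt hA0).2 (mem_degreeLT.1 (hAmem _))
          rw [hc, natDegree_mul hg10 hc0, hdg1] at hlt
          exact (natDegree_lt_iff_degree_lt hc0).1 (by omega)
      refine ⟨⟨c, hcmem⟩, ?_⟩
      funext i
      rw [hψapp, hψfun]; dsimp only
      by_cases hi : (i : ℕ) < n - 1
      · rw [if_pos hi, show (c : Polynomial ℂ) * g1 = Aof (wv v) by rw [hc]; ring,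
          hAcoeff (wv v) (i : ℕ) hi, hwv_eq]
      · have hiN : (i : ℕ) < 2 * n - 1 := i.isLt
        rw [if_neg hi, show -((c : Polynomial ℂ) * f1) = Bof (wv v) by rw [hBc],
          hBcoeff (wv v) ((i : ℕ) - (n - 1)) (by omega)]
        rw [show n - 1 + ((i : ℕ) - (n - 1)) = (i : ℕ) by omega, hwv_eq]
  rw [← hrange, ← LinearEquiv.finrank_eq (LinearEquiv.ofInjective ψ hψinj),
    LinearEquiv.finrank_eq (Polynomial.degreeLTEquiv ℂ k), Module.finrank_fin_fun]

/-- The nullity of the Sylvester resultant matrix `R(f, f')` equals `n - r`, where `r` is the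
number of distinct roots of the monic degree-`n` polynomial `f`. -/
theorem nullity_sylvester_eq {n : ℕ} (hn : 1 ≤ n) (f : Polynomial ℂ) (hf : f.Monic)
    (hdeg : f.natDegree = n) (r : ℕ) (hr : r = f.roots.toFinset.card) :
    (2 * n - 1) - (sylvFf' n f).rank = n - r := by
  have h1 := sylv_ker_finrank hn f hf hdeg
  have h2 := gcd_deg_aux hn f hf hdeg
  have h3 : ((sylvFf' n f)ᵀ).rank
      + Module.finrank ℂ (LinearMap.ker ((sylvFf' n f)ᵀ.mulVecLin)) = 2 * n - 1 := by
    have h := LinearMap.finrank_range_add_finrank_ker ((sylvFf' n f)ᵀ.mulVecLin)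
    rwa [Module.finrank_fin_fun] at h
  have h4 : ((sylvFf' n f)ᵀ).rank = (sylvFf' n f).rank := Matrix.rank_transpose _
  omega
end

section
/- Let f be a monic complex polynomial of degree n, and for 1 ≤ k ≤ n+1 let d_k := deg gcd(f, f', …, f^{(k)}) (with d₀ := deg f = n). Then the number N_k of distinct roots of f of multiplicity ≥ k satisfies N_k = d_{k−1} − d_k for all 1 ≤ k ≤ n. -/
open Polynomial

/-- `gcdDerivs f k` is the monic-normalized gcd of `f, f′, …, f^{(k)}`. -/
noncomputable def gcdDerivs (f : Polynomial ℂ) : ℕ → Polynomial ℂ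
  | 0 => f
  | (k+1) => EuclideanDomain.gcd (gcdDerivs f k) (Polynomial.derivative^[k+1] f)

lemma iter_deriv_ne_zero (f : Polynomial ℂ) (hf : f.Monic) {j : ℕ} (hj : j ≤ f.natDegree) :
    derivative^[j] f ≠ 0 := by
  intro h
  have := coeff_iterate_derivative f (f.natDegree - j) (k := j)
  rw [h, coeff_zero, Nat.sub_add_cancel hj, hf.coeff_natDegree, nsmul_eq_mul, mul_one] at this
  exact (Nat.cast_ne_zero.2 (fun h0 => absurd (Nat.descFactorial_eq_zero_iff_lt.1 h0) (not_lt.2 hj))) this.symm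

lemma gcdDerivs_ne_zero (f : Polynomial ℂ) (hf : f ≠ 0) (k : ℕ) : gcdDerivs f k ≠ 0 := by
  induction k with
  | zero => exact hf
  | succ k ih =>
      intro h
      rw [gcdDerivs, EuclideanDomain.gcd_eq_zero_iff] at h
      exact ih h.1

lemma rm_gcd (p q : Polynomial ℂ) (hp : p ≠ 0) (hq : q ≠ 0) (a : ℂ) :
    rootMultiplicity a (EuclideanDomain.gcd p q) =
      min (rootMultiplicity a p) (rootMultiplicity a q) := by
  have hg : EuclideanDomain.gcd p q ≠ 0 := fun h =>
    hp ((EuclideanDomain.gcd_eq_zero_iff).1 h).1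
  apply le_antisymm
  · exact le_min
      ((le_rootMultiplicity_iff hp).2
        ((pow_rootMultiplicity_dvd _ _).trans (EuclideanDomain.gcd_dvd_left p q)))
      ((le_rootMultiplicity_iff hq).2
        ((pow_rootMultiplicity_dvd _ _).trans (EuclideanDomain.gcd_dvd_right p q)))
  · rw [le_rootMultiplicity_iff hg]
    exact EuclideanDomain.dvd_gcd
      ((pow_dvd_pow _ (min_le_left _ _)).trans (pow_rootMultiplicity_dvd p a))
      ((pow_dvd_pow _ (min_le_right _ _)).trans (pow_rootMultiplicity_dvd q a))

lemma rm_iterate (f : Polynomial ℂ) (hf : f ≠ 0) (a : ℂ) :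
    ∀ j : ℕ, j ≤ rootMultiplicity a f →
      rootMultiplicity a (derivative^[j] f) = rootMultiplicity a f - j := by
  intro j
  induction j with
  | zero => simp
  | succ j ih =>
      intro hj
      have hj' : j ≤ rootMultiplicity a f := le_of_lt hj
      have h1 : rootMultiplicity a (derivative^[j] f) = rootMultiplicity a f - j := ih hj'
      have hpos : 0 < rootMultiplicity a (derivative^[j] f) := by omega
      have hne : derivative^[j] f ≠ 0 := by
        intro h; rw [h, rootMultiplicity_zero] at hpos; exact hpos.false
      have hroot : (derivative^[j] f).IsRoot a :=
        (rootMultiplicity_pos hne).1 hpos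
      rw [Function.iterate_succ_apply', derivative_rootMultiplicity_of_root hroot, h1]
      omega

lemma rm_gcdDerivs (f : Polynomial ℂ) (hf : f.Monic) :
    ∀ k : ℕ, k ≤ f.natDegree → ∀ a : ℂ,
      rootMultiplicity a (gcdDerivs f k) = rootMultiplicity a f - k := by
  have hf0 : f ≠ 0 := hf.ne_zero
  intro k
  induction k with
  | zero => simp [gcdDerivs]
  | succ k ih =>
      intro hk a
      have hk' : k ≤ f.natDegree := le_of_lt hk
      rw [gcdDerivs, rm_gcd _ _ (gcdDerivs_ne_zero f hf0 k) (iter_deriv_ne_zero f hf hk),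
        ih hk' a]
      rcases le_or_gt (k + 1) (rootMultiplicity a f) with h | h
      · rw [rm_iterate f hf0 a (k + 1) h]; omega
      · have : rootMultiplicity a f - k = 0 := by omega
        rw [this]; omega

lemma natDegree_eq_sum_rm (g : Polynomial ℂ) (hg : g ≠ 0) (s : Finset ℂ)
    (hs : g.roots.toFinset ⊆ s) :
    g.natDegree = ∑ a ∈ s, rootMultiplicity a g := by
  classical
  have hsplit : Splits g := IsAlgClosed.splits g
  have h1 : g.roots.card = g.natDegree := (splits_iff_card_roots).1 hsplit
  have h2 : g.roots.card = ∑ a ∈ g.roots.toFinset, g.roots.count a :=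
    (Multiset.toFinset_sum_count_eq g.roots).symm
  rw [← h1, h2]
  simp only [count_roots]
  exact Finset.sum_subset hs fun a _ ha =>
    rootMultiplicity_eq_zero fun h => ha (Multiset.mem_toFinset.2 ((mem_roots hg).2 h))

/-- With `d_k := deg gcd(f, f′, …, f^{(k)})` (so `d₀ = deg f = n`), the number `N_k` of
distinct roots of `f` of multiplicity `≥ k` satisfies `N_k = d_{k-1} - d_k` for `1 ≤ k ≤ n`. -/
theorem card_roots_multiplicity_ge {n : ℕ} (hn : 1 ≤ n) (f : Polynomial ℂ) (hf : f.Monic)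
    (hdeg : f.natDegree = n) :
    ∀ k, 1 ≤ k → k ≤ n →
      (f.roots.toFinset.filter (fun α => k ≤ f.rootMultiplicity α)).card =
        (gcdDerivs f (k - 1)).natDegree - (gcdDerivs f k).natDegree := by
  classical
  intro k hk1 hkn
  have hf0 : f ≠ 0 := hf.ne_zero
  set S := f.roots.toFinset with hS
  have hsub : ∀ m, m ≤ n → (gcdDerivs f m).roots.toFinset ⊆ S := by
    intro m hm a ha
    rw [Multiset.mem_toFinset, mem_roots (gcdDerivs_ne_zero f hf0 m)] at ha
    have := (rootMultiplicity_pos (gcdDerivs_ne_zero f hf0 m)).2 ha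
    rw [rm_gcdDerivs f hf m (hdeg ▸ hm) a] at this
    rw [hS, Multiset.mem_toFinset, mem_roots hf0]
    exact (rootMultiplicity_pos hf0).1 (by omega)
  have hdk : ∀ m, m ≤ n →
      (gcdDerivs f m).natDegree = ∑ a ∈ S, (rootMultiplicity a f - m) := by
    intro m hm
    rw [natDegree_eq_sum_rm _ (gcdDerivs_ne_zero f hf0 m) S (hsub m hm)]
    exact Finset.sum_congr rfl fun a _ => rm_gcdDerivs f hf m (hdeg ▸ hm) a
  rw [hdk (k - 1) (by omega), hdk k hkn]
  have key : ∀ a ∈ S, rootMultiplicity a f - (k - 1) =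
      (rootMultiplicity a f - k) + (if k ≤ rootMultiplicity a f then 1 else 0) := by
    intro a _
    split <;> omega
  rw [Finset.sum_congr rfl key, Finset.sum_add_distrib, Nat.add_sub_cancel_left,
    ← Finset.card_filter]
end

section
/- Let Ω be a connected topological space and S a set of continuous complex-valued functions on Ω such that the set S(t) := {f(t) : f ∈ S} ⊆ ℂ is finite and has the same cardinality for every t ∈ Ω. If f, g ∈ S satisfy f(t₀) = g(t₀) for some t₀ ∈ Ω, then f = g. -/
/-- If `S` is a family of continuous complex functions on a connected space `Ω` such that the
value set `S(t) = {f(t) : f ∈ S}` is finite with cardinality independent of `t`, then two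
members of `S` agreeing at one point are equal. -/
theorem eq_of_agree_at_point {Ω : Type*} [TopologicalSpace Ω] [ConnectedSpace Ω]
    (S : Set (Ω → ℂ)) (hcont : ∀ f ∈ S, Continuous f) (m : ℕ)
    (hcard : ∀ t : Ω, ((fun f : Ω → ℂ => f t) '' S).Finite ∧
      ((fun f : Ω → ℂ => f t) '' S).ncard = m)
    (f g : Ω → ℂ) (hf : f ∈ S) (hg : g ∈ S) (t₀ : Ω) (h₀ : f t₀ = g t₀) :
    f = g := by
  classical
  -- key local step: if f and g agree at t, they agree near t
  have key : ∀ t : Ω, f t = g t → ∀ᶠ s in nhds t, f s = g s := by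
    intro t hfg
    obtain ⟨hfin, hm⟩ := hcard t
    set V := (fun f : Ω → ℂ => f t) '' S with hV
    -- choose for each value v ∈ V a function F v ∈ S attaining it at t
    have hex : ∀ v : ℂ, ∃ F : Ω → ℂ, v ∈ V → F ∈ S ∧ F t = v := by
      intro v
      by_cases h : v ∈ V
      · obtain ⟨F, hFS, hFt⟩ := h
        exact ⟨F, fun _ => ⟨hFS, hFt⟩⟩
      · exact ⟨f, fun h' => absurd h' h⟩
    choose F hFspec using hex
    have hFS : ∀ v ∈ V, F v ∈ S := fun v hv => (hFspec v hv).1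
    have hFt : ∀ v ∈ V, F v t = v := fun v hv => (hFspec v hv).2
    -- near t, the F v have pairwise distinct values
    have hdist : ∀ᶠ s in nhds t, ∀ v ∈ V, ∀ w ∈ V, v ≠ w → F v s ≠ F w s := by
      refine hfin.eventually_all.mpr ?_
      intro v hv
      refine hfin.eventually_all.mpr ?_
      intro w hw
      by_cases hvw : v = w
      · filter_upwards with s h; exact absurd hvw h
      · have hne : F v t - F w t ≠ 0 := by
          rw [hFt v hv, hFt w hw, sub_ne_zero]; exact hvw
        have hc : ContinuousAt (fun s => F v s - F w s) t :=
          ((hcont _ (hFS v hv)).sub (hcont _ (hFS w hw))).continuousAt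
        filter_upwards [hc.eventually_ne hne] with s hs _
        exact sub_ne_zero.mp hs
    -- hence near t, the values F v s, v ∈ V, exhaust S(s)
    have himg : ∀ s : Ω, (∀ v ∈ V, ∀ w ∈ V, v ≠ w → F v s ≠ F w s) →
        (fun f : Ω → ℂ => f s) '' S = (fun v => F v s) '' V := by
      intro s hs
      refine (Set.eq_of_subset_of_ncard_le ?_ ?_ (hcard s).1).symm
      · rintro x ⟨v, hv, rfl⟩
        exact ⟨F v, hFS v hv, rfl⟩
      · have hinj : Set.InjOn (fun v => F v s) V := by
          intro v hv w hw h
          by_contra hvw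
          exact hs v hv w hw hvw h
        rw [Set.ncard_image_of_injOn hinj, hm, (hcard s).2]
    set v₀ := f t with hv₀
    have hv₀V : v₀ ∈ V := ⟨f, hf, rfl⟩
    -- near t, f and g both avoid F v for v ≠ v₀
    have havoid : ∀ h : Ω → ℂ, h ∈ S → h t = v₀ →
        ∀ᶠ s in nhds t, ∀ v ∈ V, v ≠ v₀ → h s ≠ F v s := by
      intro h hhS hht
      refine hfin.eventually_all.mpr ?_
      intro v hv
      by_cases hvv : v = v₀
      · filter_upwards with s h; exact absurd hvv h
      · have hne : h t - F v t ≠ 0 := by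
          rw [hht, hFt v hv, sub_ne_zero]; exact fun e => hvv e.symm
        have hc : ContinuousAt (fun s => h s - F v s) t :=
          ((hcont _ hhS).sub (hcont _ (hFS v hv))).continuousAt
        filter_upwards [hc.eventually_ne hne] with s hs _
        exact sub_ne_zero.mp hs
    filter_upwards [hdist, havoid f hf rfl, havoid g hg hfg.symm] with s hs hfs hgs
    have heq := himg s hs
    have hfv : f s = F v₀ s := by
      have : f s ∈ (fun v => F v s) '' V := heq ▸ ⟨f, hf, rfl⟩
      obtain ⟨v, hv, hveq⟩ := this
      by_cases hvv : v = v₀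
      · rw [← hveq, hvv]
      · exact absurd hveq.symm (hfs v hv hvv)
    have hgv : g s = F v₀ s := by
      have : g s ∈ (fun v => F v s) '' V := heq ▸ ⟨g, hg, rfl⟩
      obtain ⟨v, hv, hveq⟩ := this
      by_cases hvv : v = v₀
      · rw [← hveq, hvv]
      · exact absurd hveq.symm (hgs v hv hvv)
    rw [hfv, hgv]
  -- clopen argument
  have hclosed : IsClosed {t : Ω | f t = g t} :=
    isClosed_eq (hcont f hf) (hcont g hg)
  have hopen : IsOpen {t : Ω | f t = g t} := by
    rw [isOpen_iff_mem_nhds]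
    intro t ht
    exact key t ht
  have huniv : {t : Ω | f t = g t} = Set.univ :=
    IsClopen.eq_univ ⟨hclosed, hopen⟩ ⟨t₀, h₀⟩
  funext s
  exact Set.eq_univ_iff_forall.mp huniv s
end

section
/- Let Z : ℝ → ℂ^{n×n} be a matrix function whose entries are polynomials in t. Then there is a finite (possibly empty) set F ⊂ ℝ such that the number of distinct eigenvalues of Z(t) equals u := max_{t∈ℝ} #spectrum(Z(t)) for all t ∈ ℝ∖F, and is strictly less than u for t ∈ F. -/
open Matrix Polynomial Set

section helpers
variable {M : Type*} [CommMonoidWithZero M] [NormalizationMonoid M]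
  [UniqueFactorizationMonoid M]
open UniqueFactorizationMonoid

omit [NormalizationMonoid M] [UniqueFactorizationMonoid M] in
lemma mprod_dvd_pow (s : Multiset M) (h : M) (hs : ∀ x ∈ s, x ∣ h) :
    s.prod ∣ h ^ Multiset.card s := by
  induction s using Multiset.induction with
  | empty => simp
  | cons a s ih =>
    simp only [Multiset.prod_cons, Multiset.card_cons, pow_succ']
    exact mul_dvd_mul (hs a (Multiset.mem_cons_self a s))
      (ih fun x hx => hs x (Multiset.mem_cons_of_mem hx))

lemma dvd_radical_pow {a : M} (ha : a ≠ 0) :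
    a ∣ radical a ^ Multiset.card (normalizedFactors a) := by
  classical
  refine ((prod_normalizedFactors ha).dvd_iff_dvd_left).mp ?_
  refine mprod_dvd_pow _ _ fun x hx => ?_
  exact Finset.dvd_prod_of_mem id (s := primeFactors a) (Multiset.mem_toFinset.mpr hx)

lemma squarefree_radical [Nontrivial M] (a : M) : Squarefree (radical a) := by
  classical
  have hprime : ∀ x ∈ (primeFactors a).val, Prime x := fun x hx =>
    prime_of_normalized_factor x (Multiset.mem_toFinset.mp hx)
  have hne : (primeFactors a).val.prod ≠ 0 :=
    Multiset.prod_ne_zero fun h0 => (hprime 0 h0).ne_zero rfl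
  have hrad : radical a = ((primeFactors a).val).prod := by
    simp only [radical, Finset.prod, Multiset.map_id]
  rw [hrad, squarefree_iff_nodup_normalizedFactors hne,
    normalizedFactors_prod_eq _ (fun x hx => (hprime x hx).irreducible)]
  have : (primeFactors a).val.map normalize = (primeFactors a).val :=
    Multiset.map_congr rfl (fun x hx => normalize_normalized_factor x
      (Multiset.mem_toFinset.mp hx)) |>.trans (Multiset.map_id _)
  rw [this]
  exact (primeFactors a).nodup
end helpers

lemma spectrum_eq_isRoot_charpoly {n : ℕ} (A : Matrix (Fin n) (Fin n) ℂ) :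
    spectrum ℂ A = {μ : ℂ | A.charpoly.IsRoot μ} := by
  ext μ
  have hdet : ((charmatrix A).map (evalRingHom μ)).det = eval μ A.charpoly := by
    rw [Matrix.charpoly, ← Polynomial.coe_evalRingHom, RingHom.map_det]; rfl
  have hmat : (charmatrix A).map (evalRingHom μ) = algebraMap ℂ _ μ - A := by
    ext i j
    by_cases h : i = j <;>
      simp [h, Matrix.map_apply, Matrix.algebraMap_matrix_apply, Matrix.sub_apply]
  rw [hmat] at hdet
  have key : IsUnit ((algebraMap ℂ (Matrix (Fin n) (Fin n) ℂ)) μ - A) ↔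
      eval μ A.charpoly ≠ 0 := by
    rw [Matrix.isUnit_iff_isUnit_det, hdet, isUnit_iff_ne_zero]
  rw [spectrum.mem_iff, mem_setOf_eq, IsRoot.def, key, not_not]

set_option maxHeartbeats 1000000 in
set_option synthInstance.maxHeartbeats 200000 in
/-- For a matrix function `Z : ℝ → ℂ^{n×n}` whose entries are polynomials in `t`, there is a
finite (possibly empty) set `F ⊆ ℝ` such that the number of distinct eigenvalues of `Z(t)` is a
constant `u = max_t #spectrum(Z(t))` off `F`, and strictly smaller on `F`. -/
theorem bifurcation_points_finite {n : ℕ} (P : Fin n → Fin n → Polynomial ℂ)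
    (Z : ℝ → Matrix (Fin n) (Fin n) ℂ)
    (hZ : ∀ t : ℝ, ∀ i j, Z t i j = (P i j).eval (t : ℂ)) :
    ∃ (F : Set ℝ) (u : ℕ), F.Finite ∧
      (∀ t : ℝ, t ∉ F → (spectrum ℂ (Z t)).ncard = u) ∧
      (∀ t ∈ F, (spectrum ℂ (Z t)).ncard < u) := by
  classical
  set K := FractionRing (Polynomial ℂ) with hK
  have hCZ : CharZero K := charZero_of_injective_algebraMap (IsFractionRing.injective (Polynomial ℂ) K)
  set φ : (Polynomial ℂ) →+* K := algebraMap (Polynomial ℂ) K with hφdef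
  have hφ : Function.Injective φ := IsFractionRing.injective (Polynomial ℂ) K
  have hφX : Function.Injective (Polynomial.map φ) := Polynomial.map_injective φ hφ
  set M : Matrix (Fin n) (Fin n) (Polynomial ℂ) := Matrix.of P with hM
  set q : (Polynomial ℂ)[X] := M.charpoly with hq
  have hq_monic : q.Monic := M.charpoly_monic
  set qK : K[X] := q.map φ with hqK
  have hqK_monic : qK.Monic := hq_monic.map φ
  have hqK0 : qK ≠ 0 := hqK_monic.ne_zero
  set h : K[X] := UniqueFactorizationMonoid.radical qK with hh
  have hh0 : h ≠ 0 := UniqueFactorizationMonoid.radical_ne_zero (a := qK)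
  have hsq : Squarefree h := squarefree_radical qK
  have hsep : h.Separable := PerfectField.separable_iff_squarefree.mpr hsq
  have hhdvd : h ∣ qK := UniqueFactorizationMonoid.radical_dvd_self (a := qK)
  obtain ⟨N₀, hqKdvd⟩ : ∃ N₀, qK ∣ h ^ (N₀ + 1) := by
    refine ⟨Multiset.card (UniqueFactorizationMonoid.normalizedFactors qK), ?_⟩
    exact (dvd_radical_pow hqK0).trans (pow_dvd_pow _ (Nat.le_succ _))
  set N := N₀ + 1 with hN
  -- integer normalization and primitive part
  obtain ⟨bh, hbh⟩ := IsLocalization.integerNormalization_map_to_map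
      (nonZeroDivisors (Polynomial ℂ)) h
  rw [← hφdef] at hbh
  set h₀ : (Polynomial ℂ)[X] := IsLocalization.integerNormalization (nonZeroDivisors (Polynomial ℂ)) h with hh₀
  have hh₀0 : h₀ ≠ 0 := by
    rw [hh₀, Ne, IsFractionRing.integerNormalization_eq_zero_iff]; exact hh0
  set g : (Polynomial ℂ)[X] := h₀.primPart with hgdef
  have hgprim : g.IsPrimitive := h₀.isPrimitive_primPart
  have hg0 : g ≠ 0 := h₀.primPart_ne_zero
  -- `g.map φ = C k * h` with `k ≠ 0`
  obtain ⟨k, hk0, hgh⟩ : ∃ k : K, k ≠ 0 ∧ g.map φ = C k * h := by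
    have h1 : h₀.map φ = C (φ (bh : (Polynomial ℂ))) * h := by
      rw [hbh, ← algebraMap_smul K ((bh : (Polynomial ℂ))) h, smul_eq_C_mul]
    have h2 : h₀.map φ = C (φ h₀.content) * (g.map φ) := by
      conv_lhs => rw [h₀.eq_C_content_mul_primPart]
      rw [Polynomial.map_mul, Polynomial.map_C]
    have hc0 : φ h₀.content ≠ 0 := fun hc =>
      hh₀0 (content_eq_zero_iff.mp (hφ (by rwa [map_zero])))
    have hb0 : φ (bh : (Polynomial ℂ)) ≠ 0 := fun hb =>
      nonZeroDivisors.coe_ne_zero bh (hφ (by rwa [map_zero]))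
    refine ⟨φ (bh : (Polynomial ℂ)) / φ h₀.content, div_ne_zero hb0 hc0, ?_⟩
    apply mul_left_cancel₀ (b := g.map φ) (C_ne_zero.mpr hc0)
    rw [← h2, h1, ← mul_assoc, ← C_mul,
      mul_div_cancel₀ _ hc0]
  -- divisibility both ways, pulled back to (Polynomial ℂ)[X]
  have hgdvdq : g ∣ q := by
    rw [hgprim.dvd_iff_fraction_map_dvd_fraction_map K]
    obtain ⟨w, hw⟩ := hhdvd
    refine ⟨C k⁻¹ * w, ?_⟩
    show qK = _
    rw [hw, hgh]
    calc h * w = (C k * C k⁻¹) * (h * w) := by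
          rw [← C_mul, mul_inv_cancel₀ hk0, C_1, one_mul]
      _ = C k * h * (C k⁻¹ * w) := by ring
  have hqdvdgN : q ∣ g ^ N := by
    have hmap : q.map φ ∣ (g ^ N).map φ := by
      rw [Polynomial.map_pow, hgh, mul_pow, ← map_pow C k N]
      obtain ⟨w, hw⟩ := hqKdvd
      exact Dvd.dvd.mul_left (⟨w, hw⟩ : qK ∣ h ^ N) _
    have := (Polynomial.modByMonic_eq_zero_iff_dvd hqK_monic).mpr hmap
    rw [← Polynomial.map_modByMonic _ hq_monic] at this
    rw [← Polynomial.modByMonic_eq_zero_iff_dvd hq_monic]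
    exact hφX (by rwa [Polynomial.map_zero])
  -- Separability of `g.map φ`
  have hsepg : (g.map φ).Separable := by
    obtain ⟨a, b, hab⟩ := hsep
    refine ⟨C k⁻¹ * a, C k⁻¹ * b, ?_⟩
    rw [hgh, derivative_C_mul]
    calc C k⁻¹ * a * (C k * h) + C k⁻¹ * b * (C k * derivative h)
        = (C k⁻¹ * C k) * (a * h + b * derivative h) := by ring
      _ = 1 := by rw [← C_mul, inv_mul_cancel₀ hk0, C_1, one_mul, hab]
  -- Bezout identity cleared of denominators
  obtain ⟨a, b, hab⟩ := hsepg
  obtain ⟨ma, hma⟩ := IsLocalization.integerNormalization_map_to_map (nonZeroDivisors (Polynomial ℂ)) a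
  obtain ⟨mb, hmb⟩ := IsLocalization.integerNormalization_map_to_map (nonZeroDivisors (Polynomial ℂ)) b
  rw [← hφdef] at hma hmb
  set A₀ : (Polynomial ℂ)[X] := IsLocalization.integerNormalization (nonZeroDivisors (Polynomial ℂ)) a with hA₀
  set B₀ : (Polynomial ℂ)[X] := IsLocalization.integerNormalization (nonZeroDivisors (Polynomial ℂ)) b with hB₀
  set e : (Polynomial ℂ) := (ma : (Polynomial ℂ)) * (mb : (Polynomial ℂ)) with he
  have he0 : e ≠ 0 := mul_ne_zero (nonZeroDivisors.coe_ne_zero ma)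
    (nonZeroDivisors.coe_ne_zero mb)
  have hE : C (mb : (Polynomial ℂ)) * A₀ * g + C (ma : (Polynomial ℂ)) * B₀ * derivative g = C e := by
    apply hφX
    rw [Polynomial.map_add, Polynomial.map_mul, Polynomial.map_mul, Polynomial.map_mul,
      Polynomial.map_mul, Polynomial.map_C, Polynomial.map_C, Polynomial.map_C,
      hma, hmb, ← algebraMap_smul K ((ma : (Polynomial ℂ))) a, smul_eq_C_mul,
      ← algebraMap_smul K ((mb : (Polynomial ℂ))) b, smul_eq_C_mul,
      ← derivative_map, he, _root_.map_mul φ, C_mul]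
    ring_nf
    linear_combination (C (φ (ma : (Polynomial ℂ))) * C (φ (mb : (Polynomial ℂ)))) * hab
  -- specialization at `t`
  have hZt : ∀ t : ℝ, Z t = M.map (evalRingHom ((t : ℂ))) := by
    intro t; ext i j; simp [hZ, hM, Matrix.map_apply]
  have hcp : ∀ t : ℝ, (Z t).charpoly = q.map (evalRingHom ((t : ℂ))) := by
    intro t; rw [hZt t, hq]; exact Matrix.charpoly_map M _
  set u := g.natDegree with hu
  set S : ℝ → Set ℂ := fun t => {x : ℂ | (g.map (evalRingHom ((t : ℂ)))).IsRoot x} with hS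
  have hspec : ∀ t : ℝ, spectrum ℂ (Z t) = S t := by
    intro t
    rw [spectrum_eq_isRoot_charpoly, hcp]
    ext x
    simp only [hS, mem_setOf_eq, IsRoot.def]
    constructor
    · intro hx
      obtain ⟨w, hw⟩ := hqdvdgN
      have h2 : eval x ((g ^ N).map (evalRingHom ((t : ℂ)))) = 0 := by
        rw [hw, Polynomial.map_mul, eval_mul, hx, zero_mul]
      rw [Polynomial.map_pow, eval_pow] at h2
      exact pow_eq_zero_iff (Nat.succ_ne_zero N₀) |>.mp h2
    · intro hx
      obtain ⟨w, hw⟩ := hgdvdq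
      rw [hw, Polynomial.map_mul, eval_mul, hx, zero_mul]
  -- the specialized `g` never vanishes identically
  have hgt0 : ∀ t : ℝ, g.map (evalRingHom ((t : ℂ))) ≠ 0 := by
    intro t hc
    have hdvd : C ((Polynomial.X : (Polynomial ℂ)) - Polynomial.C ((t : ℂ))) ∣ g := by
      rw [Polynomial.C_dvd_iff_dvd_coeff]
      intro i
      rw [dvd_iff_isRoot]
      have : (g.map (evalRingHom ((t : ℂ)))).coeff i = 0 := by rw [hc]; simp
      rwa [coeff_map] at this
    exact Polynomial.not_isUnit_X_sub_C _ (hgprim _ hdvd)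
  -- counting roots
  have hcard_eq : ∀ t : ℝ, (S t) = ↑((g.map (evalRingHom ((t : ℂ)))).roots.toFinset) := by
    intro t
    ext x
    simp [hS, Multiset.mem_toFinset, mem_roots', hgt0 t, IsRoot.def]
  have hcard_le : ∀ t : ℝ, (S t).ncard ≤ u := by
    intro t
    rw [hcard_eq t, Set.ncard_coe_finset]
    calc (g.map (evalRingHom ((t : ℂ)))).roots.toFinset.card
        ≤ Multiset.card (g.map (evalRingHom ((t : ℂ)))).roots := Multiset.toFinset_card_le _
      _ ≤ (g.map (evalRingHom ((t : ℂ)))).natDegree := Polynomial.card_roots' _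
      _ ≤ u := Polynomial.natDegree_map_le
  set D : (Polynomial ℂ) := g.leadingCoeff * e with hD
  have hD0 : D ≠ 0 := mul_ne_zero (leadingCoeff_ne_zero.mpr hg0) he0
  have hgood : ∀ t : ℝ, ¬ D.IsRoot ((t : ℂ)) → (S t).ncard = u := by
    intro t ht
    rw [IsRoot.def, hD, eval_mul] at ht
    obtain ⟨hlc, hev⟩ := mul_ne_zero_iff.mp ht
    set ψ := evalRingHom ((t : ℂ)) with hψ
    have hdeg : (g.map ψ).natDegree = u :=
      Polynomial.natDegree_map_of_leadingCoeff_ne_zero ψ hlc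
    have hsept : (g.map ψ).Separable := by
      have hEt := congrArg (Polynomial.map ψ) hE
      rw [Polynomial.map_add, Polynomial.map_mul, Polynomial.map_mul, Polynomial.map_mul,
        Polynomial.map_mul, Polynomial.map_C, Polynomial.map_C, Polynomial.map_C,
        ← derivative_map] at hEt
      refine ⟨C (ψ e)⁻¹ * (C (ψ (mb : (Polynomial ℂ))) * (A₀.map ψ)),
        C (ψ e)⁻¹ * (C (ψ (ma : (Polynomial ℂ))) * (B₀.map ψ)), ?_⟩
      have : ψ e ≠ 0 := hev
      calc C (ψ e)⁻¹ * (C (ψ (mb : (Polynomial ℂ))) * (A₀.map ψ)) * (g.map ψ) +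
            C (ψ e)⁻¹ * (C (ψ (ma : (Polynomial ℂ))) * (B₀.map ψ)) * derivative (g.map ψ)
          = C (ψ e)⁻¹ * (C (ψ (mb : (Polynomial ℂ))) * (A₀.map ψ) * (g.map ψ) +
              C (ψ (ma : (Polynomial ℂ))) * (B₀.map ψ) * derivative (g.map ψ)) := by ring
        _ = C (ψ e)⁻¹ * C (ψ e) := by rw [hEt]
        _ = 1 := by rw [← C_mul, inv_mul_cancel₀ this, C_1]
    have hnodup : (g.map ψ).roots.Nodup := Polynomial.nodup_roots hsept
    have hsplit : Multiset.card (g.map ψ).roots = (g.map ψ).natDegree :=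
      (splits_iff_card_roots).mp (IsAlgClosed.splits _)
    rw [hcard_eq t, Set.ncard_coe_finset, Multiset.toFinset_card_eq_card_iff_nodup.mpr hnodup, hsplit, hdeg]
  -- assemble
  refine ⟨{t : ℝ | (spectrum ℂ (Z t)).ncard ≠ u}, u, ?_, ?_, ?_⟩
  · have hsub : {t : ℝ | (spectrum ℂ (Z t)).ncard ≠ u} ⊆
        ((fun t : ℝ => (t : ℂ)) ⁻¹' {x : ℂ | D.IsRoot x}) := by
      intro t ht
      by_contra hroot
      exact ht (by rw [hspec t]; exact hgood t hroot)
    exact ((Polynomial.finite_setOf_isRoot hD0).preimage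
      ((Complex.ofReal_injective).injOn)).subset hsub
  · intro t ht
    simpa using not_not.mp (fun hne => ht hne)
  · intro t ht
    have hle : (spectrum ℂ (Z t)).ncard ≤ u := by rw [hspec t]; exact hcard_le t
    exact lt_of_le_of_ne hle ht
end

section
/- Let A ∈ ℂ^{n×n}, S a structure set, ε > 0, and let T be a connected component of the strict structured ε-pseudospectrum Λ'_{S,ε}(A). Then for every z ∈ ℂ^s with ‖z‖ < ε, the sum of the algebraic multiplicities of the eigenvalues of A + M_S(z) lying in T equals the sum of the algebraic multiplicities of the eigenvalues of A lying in T. -/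
open Matrix Polynomial Set Filter Topology
open scoped Classical NNReal

section Helpers

open Matrix Polynomial Set Filter Topology
open scoped Classical NNReal

namespace MCAux2

variable {n : ℕ}

lemma eval_charpoly (M : Matrix (Fin n) (Fin n) ℂ) (μ : ℂ) :
    M.charpoly.eval μ = (μ • (1 : Matrix (Fin n) (Fin n) ℂ) - M).det := by
  rw [Matrix.charpoly, ← Polynomial.coe_evalRingHom, RingHom.map_det]
  congr 1
  ext i j
  simp only [RingHom.mapMatrix_apply, Matrix.map_apply, Polynomial.coe_evalRingHom,
    Matrix.charmatrix_apply, Matrix.sub_apply, Polynomial.eval_sub, Matrix.smul_apply,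
    Matrix.one_apply, Matrix.diagonal_apply, Polynomial.eval_C, smul_eq_mul]
  split <;> simp

lemma mem_spectrum_iff_isRoot (M : Matrix (Fin n) (Fin n) ℂ) (μ : ℂ) :
    μ ∈ spectrum ℂ M ↔ M.charpoly.IsRoot μ := by
  rw [spectrum.mem_iff, Polynomial.IsRoot, eval_charpoly,
    Algebra.algebraMap_eq_smul_one]
  rw [← not_iff_not]
  push_neg
  rw [Matrix.isUnit_iff_isUnit_det, isUnit_iff_ne_zero]

lemma root_norm_le {p : ℂ[X]} (hm : p.Monic) {x : ℂ} (hx : p.IsRoot x) :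
    ‖x‖ ≤ 1 + ∑ i ∈ Finset.range p.natDegree, ‖p.coeff i‖ := by
  have h := Polynomial.IsRoot.norm_lt_cauchyBound hm.ne_zero hx
  have hcb : (p.cauchyBound : ℝ) ≤ 1 + ∑ i ∈ Finset.range p.natDegree, ‖p.coeff i‖ := by
    rw [Polynomial.cauchyBound, hm.leadingCoeff]
    simp only [nnnorm_one, div_one]
    push_cast
    have : ((Finset.range p.natDegree).sup fun i => ‖p.coeff i‖₊ : ℝ≥0) ≤
        ∑ i ∈ Finset.range p.natDegree, ‖p.coeff i‖₊ := by
      apply Finset.sup_le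
      intro i hi
      exact Finset.single_le_sum (f := fun i => ‖p.coeff i‖₊) (fun _ _ => zero_le) hi
    have h2 : (((Finset.range p.natDegree).sup fun i => ‖p.coeff i‖₊ : ℝ≥0) : ℝ) ≤
        ∑ i ∈ Finset.range p.natDegree, ‖p.coeff i‖ := by
      calc _ ≤ ((∑ i ∈ Finset.range p.natDegree, ‖p.coeff i‖₊ : ℝ≥0) : ℝ) := by exact_mod_cast this
      _ = _ := by push_cast; rfl
    linarith
  calc ‖x‖ ≤ (p.cauchyBound : ℝ) := le_of_lt (by exact_mod_cast h)
  _ ≤ _ := hcb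

end MCAux2


open Matrix Polynomial Set Filter Topology
open scoped Classical

namespace MCAux

variable {n : ℕ}

lemma continuous_coeff_prod {α β : Type*} [TopologicalSpace α] (s : Finset β)
    (f : β → α → Polynomial ℂ)
    (hf : ∀ b ∈ s, ∀ k, Continuous fun x => (f b x).coeff k) (k : ℕ) :
    Continuous fun x => (∏ b ∈ s, f b x).coeff k := by
  induction s using Finset.cons_induction generalizing k with
  | empty => simp only [Finset.prod_empty]; exact continuous_const
  | cons a s ha ih =>
    simp only [Finset.prod_cons, Polynomial.coeff_mul]
    exact continuous_finset_sum _ fun p _ =>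
      (hf a (Finset.mem_cons_self a s) p.1).mul
        (ih (fun b hb k' => hf b (Finset.mem_cons_of_mem hb) k') p.2)

lemma continuous_charpoly_coeff (k : ℕ) :
    Continuous fun M : Matrix (Fin n) (Fin n) ℂ => M.charpoly.coeff k := by
  have hentry : ∀ (i j : Fin n) (k : ℕ),
      Continuous fun M : Matrix (Fin n) (Fin n) ℂ => (charmatrix M i j).coeff k := by
    intro i j k
    have h : (fun M : Matrix (Fin n) (Fin n) ℂ => (charmatrix M i j).coeff k)
        = fun M => ((Matrix.diagonal fun _ : Fin n => (X : ℂ[X])) i j).coeff k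
            - (if k = 0 then M i j else 0) := by
      funext M
      rw [Matrix.charmatrix_apply, Polynomial.coeff_sub, Polynomial.coeff_C]
    rw [h]
    refine continuous_const.sub ?_
    split
    · exact continuous_id.matrix_elem i j
    · exact continuous_const
  have h : (fun M : Matrix (Fin n) (Fin n) ℂ => M.charpoly.coeff k)
      = fun M => ∑ σ : Equiv.Perm (Fin n),
          (Equiv.Perm.sign σ : ℤ) • (∏ i, charmatrix M (σ i) i).coeff k := by
    funext M
    rw [Matrix.charpoly, Matrix.det_apply, Polynomial.finset_sum_coeff]
    simp only [Polynomial.coeff_smul, Units.smul_def]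
  rw [h]
  exact continuous_finset_sum _ fun σ _ =>
    (continuous_coeff_prod Finset.univ (fun i M => charmatrix M (σ i) i)
      (fun i _ k' => hentry (σ i) i k') k).const_smul _

end MCAux

open Matrix Polynomial Set Filter Topology
open scoped Classical NNReal

namespace MCAux3

lemma exists_ofFn (n : ℕ) (s : Multiset ℂ) (h : Multiset.card s = n) :
    ∃ f : Fin n → ℂ, s = (List.ofFn f : List ℂ) := by
  induction n generalizing s with
  | zero =>
    refine ⟨Fin.elim0, ?_⟩
    rw [Multiset.card_eq_zero] at h
    simp [h]
  | succ n ih =>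
    have hpos : 0 < Multiset.card s := by omega
    obtain ⟨a, ha⟩ := Multiset.card_pos_iff_exists_mem.mp hpos
    obtain ⟨t, rfl⟩ := Multiset.exists_cons_of_mem ha
    have ht : Multiset.card t = n := by
      simpa using h
    obtain ⟨g, hg⟩ := ih t ht
    refine ⟨Fin.cons a g, ?_⟩
    rw [List.ofFn_succ]
    simp only [Fin.cons_zero, Fin.cons_succ]
    rw [← Multiset.cons_coe, ← hg]

lemma monic_eq_prod_ofFn {q : ℂ[X]} (hq : q.Monic) {m : ℕ} {v : Fin m → ℂ}
    (hv : q.roots = (List.ofFn v : List ℂ)) :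
    q = ∏ i, (X - C (v i)) := by
  have hsplit : q.Splits := IsAlgClosed.splits q
  have := hsplit.eq_prod_roots_of_monic hq
  rw [hv] at this
  rw [this, Multiset.map_coe, Multiset.prod_coe, List.map_ofFn, List.prod_ofFn]
  rfl

lemma roots_card_eq {q : ℂ[X]} (hq : q.Monic) :
    Multiset.card q.roots = q.natDegree :=
  (Polynomial.splits_iff_card_roots.mp (IsAlgClosed.splits q))


lemma coeff_prod_X_sub_C_continuous {m : ℕ} (k : ℕ) :
    Continuous fun u : Fin m → ℂ => (∏ i, (X - C (u i))).coeff k := by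
  apply MCAux.continuous_coeff_prod
  intro i _ k'
  have h : (fun u : Fin m → ℂ => (X - C (u i)).coeff k')
      = fun u => (X : ℂ[X]).coeff k' - (if k' = 0 then u i else 0) := by
    funext u
    rw [Polynomial.coeff_sub, Polynomial.coeff_C]
  rw [h]
  refine continuous_const.sub ?_
  split
  · exact continuous_apply i
  · exact continuous_const

lemma core {q : ℕ → ℂ[X]} {p : ℂ[X]} (hq : ∀ k, (q k).Monic) (hp : p.Monic)
    (hcoe : ∀ j, Tendsto (fun k => (q k).coeff j) atTop (𝓝 (p.coeff j)))
    {R : ℝ} (hR : ∀ k x, x ∈ (q k).roots → ‖x‖ ≤ R)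
    {m : ℕ} (hdeg : ∀ k, (q k).natDegree = m) (v : ℕ → Fin m → ℂ)
    (hv : ∀ k, (q k).roots = (List.ofFn (v k) : List ℂ)) :
    ∃ φ : ℕ → ℕ, StrictMono φ ∧ ∃ w : Fin m → ℂ,
      p.roots = (List.ofFn w : List ℂ) ∧
      ∀ i, Tendsto (fun k => v (φ k) i) atTop (𝓝 (w i)) := by
  have hmemroots : ∀ k i, v k i ∈ (q k).roots := by
    intro k i
    rw [hv k]
    exact Multiset.mem_coe.mpr (List.mem_ofFn.mpr ⟨i, rfl⟩)
  -- compactness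
  have hcpt : IsCompact (Set.pi Set.univ fun _ : Fin m => Metric.closedBall (0:ℂ) R) :=
    isCompact_univ_pi fun _ => isCompact_closedBall 0 R
  have hmem : ∀ k, v k ∈ Set.pi Set.univ fun _ : Fin m => Metric.closedBall (0:ℂ) R := by
    intro k
    intro i _
    simpa [Metric.mem_closedBall, dist_eq_norm] using hR k (v k i) (hmemroots k i)
  obtain ⟨w, hwmem, φ, hφ, hconv⟩ := hcpt.tendsto_subseq hmem
  have hconv' : ∀ i, Tendsto (fun k => v (φ k) i) atTop (𝓝 (w i)) := by
    intro i
    exact ((continuous_apply i).continuousAt.tendsto).comp hconv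
  -- identify p as the product of limits
  have hqprod : ∀ k, q k = ∏ i, (X - C (v k i)) := fun k => monic_eq_prod_ofFn (hq k) (hv k)
  have hpeq : p = ∏ i, (X - C (w i)) := by
    apply Polynomial.ext
    intro j
    have h1 : Tendsto (fun k => (q (φ k)).coeff j) atTop (𝓝 (p.coeff j)) :=
      (hcoe j).comp hφ.tendsto_atTop
    have h2 : Tendsto (fun k => (q (φ k)).coeff j) atTop (𝓝 ((∏ i, (X - C (w i))).coeff j)) := by
      have : (fun k => (q (φ k)).coeff j)
          = fun k => (∏ i, (X - C (v (φ k) i))).coeff j := by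
        funext k; rw [hqprod (φ k)]
      rw [this]
      exact ((coeff_prod_X_sub_C_continuous j).continuousAt.tendsto).comp hconv
    exact tendsto_nhds_unique h1 h2
  refine ⟨φ, hφ, w, ?_, hconv'⟩
  rw [hpeq]
  have : (∏ i, (X - C (w i))) = (Multiset.map (fun a => X - C a)
      ((List.ofFn w : List ℂ) : Multiset ℂ)).prod := by
    rw [Multiset.map_coe, Multiset.prod_coe, List.map_ofFn, List.prod_ofFn]
    rfl
  rw [this, Polynomial.roots_multiset_prod_X_sub_C]

end MCAux3


namespace MCAux4
open Multiset

lemma sum_count_eq_card_filter (s : Multiset ℂ) (pr : ℂ → Prop) [DecidablePred pr] :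
    ∑ a ∈ s.toFinset.filter pr, s.count a = Multiset.card (s.filter pr) := by
  rw [← Multiset.toFinset_sum_count_eq (s.filter pr)]
  rw [Multiset.toFinset_filter]
  apply Finset.sum_congr rfl
  intro a ha
  rw [Finset.mem_filter] at ha
  rw [Multiset.count_filter, if_pos ha.2]

lemma card_filter_ofFn {m : ℕ} (g : Fin m → ℂ) (pr : ℂ → Prop) [DecidablePred pr] :
    Multiset.card (Multiset.filter pr ((List.ofFn g : List ℂ) : Multiset ℂ))
      = (Finset.univ.filter fun i => pr (g i)).card := by
  induction m with
  | zero => simp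
  | succ m ih =>
    rw [List.ofFn_succ]
    rw [← Multiset.cons_coe, Multiset.filter_cons]
    simp only [Multiset.card_add]
    rw [ih (fun i => g i.succ)]
    rw [Fin.card_filter_univ_succ (p := fun i => pr (g i))]
    split_ifs with h
    · simp [h, add_comm]
    · simp [h]

end MCAux4

end Helpers

/-- On each connected component `T` of the strict structured ε-pseudospectrum, the sum of the
algebraic multiplicities of the eigenvalues of `A + M_S(z)` lying in `T` equals the sum of the
algebraic multiplicities of the eigenvalues of `A` lying in `T`, for every `‖z‖ < ε`. -/
theorem multiplicity_conservation {n : ℕ} (A : Matrix (Fin n) (Fin n) ℂ)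
    (S : Finset (Fin n × Fin n)) (ε : ℝ) (hε : 0 < ε) (T : Set ℂ)
    (hT : ∃ w ∈ structPseudoStrict A S ε,
      T = connectedComponentIn (structPseudoStrict A S ε) w) :
    ∀ z : EuclideanSpace ℂ {p : Fin n × Fin n // p ∈ S}, ‖z‖ < ε →
      ∑ ζ ∈ (A + MS S z).charpoly.roots.toFinset.filter (fun ζ => ζ ∈ T),
          (A + MS S z).charpoly.rootMultiplicity ζ =
        ∑ α ∈ A.charpoly.roots.toFinset.filter (fun α => α ∈ T),
          A.charpoly.rootMultiplicity α := by
  obtain ⟨w0, hw0, hTdef⟩ := hT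
  intro z hz
  set Λ : Set ℂ := structPseudoStrict A S ε with hΛ
  set q : ℝ → Polynomial ℂ := fun t => (A + MS S ((t : ℂ) • z)).charpoly with hqdef
  have hq0 : q 0 = A.charpoly := by
    have : MS S ((0 : ℝ) • z : EuclideanSpace ℂ {p : Fin n × Fin n // p ∈ S}) = 0 := by
      funext i j
      simp only [MS]
      split <;> simp
    simp only [hqdef, Complex.ofReal_zero]
    rw [show ((0:ℂ) • z : EuclideanSpace ℂ {p : Fin n × Fin n // p ∈ S}) = 0 from zero_smul _ z]
    rw [show MS S (0 : EuclideanSpace ℂ {p : Fin n × Fin n // p ∈ S}) = 0 by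
      funext i j; simp only [MS]; split <;> simp]
    rw [add_zero]
  have hq1 : q 1 = (A + MS S z).charpoly := by
    simp only [hqdef, Complex.ofReal_one, one_smul]
  have hmon : ∀ t, (q t).Monic := fun t => Matrix.charpoly_monic _
  have hdeg : ∀ t, (q t).natDegree = n := by
    intro t
    simp only [hqdef]
    rw [Matrix.charpoly_natDegree_eq_dim]
    exact Fintype.card_fin n
  -- continuity of coefficients
  have hmatc : Continuous fun t : ℝ => A + MS S ((t : ℂ) • z) := by
    apply continuous_matrix
    intro i j
    simp only [Matrix.add_apply, MS]
    split
    · refine continuous_const.add ?_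
      have : (fun t : ℝ => ((t : ℂ) • z : EuclideanSpace ℂ {p : Fin n × Fin n // p ∈ S})
          ⟨(i, j), by assumption⟩) = fun t : ℝ => (t : ℂ) * z ⟨(i, j), by assumption⟩ := by
        funext t
        simp [PiLp.smul_apply, smul_eq_mul]
      rw [this]
      exact Complex.continuous_ofReal.mul continuous_const
    · exact continuous_const.add continuous_const
  have hcont : ∀ j, Continuous fun t : ℝ => (q t).coeff j := fun j =>
    (MCAux.continuous_charpoly_coeff j).comp hmatc
  -- uniform root bound on [0,1]
  obtain ⟨R, hRt⟩ : ∃ R : ℝ, ∀ t ∈ Icc (0:ℝ) 1, ∀ x, (q t).IsRoot x → ‖x‖ ≤ R := by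
    set g : ℝ → ℝ := fun t => 1 + ∑ i ∈ Finset.range n, ‖(q t).coeff i‖ with hgdef
    have hgc : Continuous g :=
      continuous_const.add (continuous_finset_sum _ fun i _ => (hcont i).norm)
    obtain ⟨t₁, ht₁, hmax⟩ := (isCompact_Icc (a := (0:ℝ)) (b := 1)).exists_isMaxOn
      (Set.nonempty_Icc.mpr (by norm_num)) hgc.continuousOn
    refine ⟨g t₁, fun t ht x hx => ?_⟩
    have h1 : ‖x‖ ≤ g t := by
      have := MCAux2.root_norm_le (hmon t) hx
      rwa [hdeg t] at this
    exact h1.trans (hmax ht)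
  -- the compact spectral tube
  set K : Set ℂ := {μ | ∃ t ∈ Icc (0:ℝ) 1, (q t).IsRoot μ} with hKdef
  have hKcpt : IsCompact K := by
    have heval : Continuous fun x : ℝ × ℂ => (q x.1).eval x.2 := by
      have h : (fun x : ℝ × ℂ => (q x.1).eval x.2)
          = fun x : ℝ × ℂ => ∑ j ∈ Finset.range (n + 1), (q x.1).coeff j * x.2 ^ j := by
        funext x
        exact Polynomial.eval_eq_sum_range' (by rw [hdeg]; omega) _
      rw [h]
      exact continuous_finset_sum _ fun j _ =>
        ((hcont j).comp continuous_fst).mul (continuous_snd.pow j)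
    have hZcpt : IsCompact ((Icc (0:ℝ) 1 ×ˢ Metric.closedBall (0:ℂ) R) ∩
        {x : ℝ × ℂ | (q x.1).eval x.2 = 0}) :=
      (isCompact_Icc.prod (isCompact_closedBall _ _)).inter_right
        (isClosed_eq heval continuous_const)
    have hKeq : K = Prod.snd '' ((Icc (0:ℝ) 1 ×ˢ Metric.closedBall (0:ℂ) R) ∩
        {x : ℝ × ℂ | (q x.1).eval x.2 = 0}) := by
      ext μ
      constructor
      · rintro ⟨t, ht, hroot⟩
        refine ⟨(t, μ), ⟨⟨ht, ?_⟩, hroot⟩, rfl⟩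
        simp only [Metric.mem_closedBall, dist_zero_right]
        exact hRt t ht μ hroot
      · rintro ⟨⟨t, ν⟩, ⟨⟨ht, _⟩, hroot⟩, rfl⟩
        exact ⟨t, ht, hroot⟩
    rw [hKeq]
    exact hZcpt.image continuous_snd
  have hKsub : K ⊆ Λ := by
    rintro μ ⟨t, ht, hroot⟩
    rw [hΛ, structPseudoStrict]
    apply Set.mem_biUnion (x := ((t : ℂ) • z : EuclideanSpace ℂ {p : Fin n × Fin n // p ∈ S}))
    · show ‖((t : ℂ) • z : EuclideanSpace ℂ {p : Fin n × Fin n // p ∈ S})‖ < ε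
      rw [norm_smul]
      calc ‖(t:ℂ)‖ * ‖z‖ ≤ 1 * ‖z‖ := by
            apply mul_le_mul_of_nonneg_right _ (norm_nonneg z)
            rw [Complex.norm_real, Real.norm_eq_abs, abs_of_nonneg ht.1]
            exact ht.2
        _ = ‖z‖ := one_mul _
        _ < ε := hz
    · exact (MCAux2.mem_spectrum_iff_isRoot _ μ).mpr hroot
  have hrootsK : ∀ t ∈ Icc (0:ℝ) 1, ∀ μ ∈ (q t).roots, μ ∈ K := by
    intro t ht μ hμ
    exact ⟨t, ht, Polynomial.isRoot_of_mem_roots hμ⟩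
  haveI : CompactSpace ↥K := isCompact_iff_compactSpace.mp hKcpt
  -- clopen separation within K of points in T from points outside T
  have hsep : ∀ a b : ↥K, (a:ℂ) ∈ T → (b:ℂ) ∉ T →
      ∃ U : Set ↥K, IsClopen U ∧ a ∈ U ∧ b ∉ U := by
    intro a b haT hbT
    have hnc : b ∉ connectedComponent a := by
      intro hb
      have hconn : IsPreconnected (Subtype.val '' connectedComponent a) :=
        isPreconnected_connectedComponent.image _ continuous_subtype_val.continuousOn
    -- the image is a connected subset of Λ containing a and b
      have hsubF : Subtype.val '' connectedComponent a ⊆ Λ := by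
        rintro _ ⟨x, _, rfl⟩
        exact hKsub x.2
      have hmema : (a : ℂ) ∈ Subtype.val '' connectedComponent a :=
        ⟨a, mem_connectedComponent, rfl⟩
      have h1 : Subtype.val '' connectedComponent a ⊆ connectedComponentIn Λ (a : ℂ) :=
        hconn.subset_connectedComponentIn hmema hsubF
      have h2 : connectedComponentIn Λ (a : ℂ) = T := by
        have haT' : (a:ℂ) ∈ connectedComponentIn Λ w0 := by rw [← hTdef]; exact haT
        rw [hTdef]
        exact (connectedComponentIn_eq haT').symm
      exact hbT (h2 ▸ h1 ⟨b, hb, rfl⟩)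
    rw [connectedComponent_eq_iInter_isClopen] at hnc
    simp only [Set.mem_iInter, not_forall] at hnc
    obtain ⟨⟨U, hUc, haU⟩, hbU⟩ := hnc
    exact ⟨U, hUc, haU, hbU⟩
  -- the clopen set V
  obtain ⟨V, hVclopen, hVmem⟩ : ∃ V : Set ↥K, IsClopen V ∧
      ∀ x : ↥K, ((x:ℂ) ∈ (q 0).roots ∨ (x:ℂ) ∈ (q 1).roots) → ((x:ℂ) ∈ T ↔ x ∈ V) := by
    set F : Set ℂ := {μ | μ ∈ (q 0).roots ∨ μ ∈ (q 1).roots} with hFdef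
    have hFfin : F.Finite := by
      apply Set.Finite.union (Set.Finite.subset ((q 0).roots.toFinset.finite_toSet) ?_)
        (Set.Finite.subset ((q 1).roots.toFinset.finite_toSet) ?_) |>.subset
      · intro μ hμ
        rcases hμ with h | h
        · exact Or.inl (show μ ∈ {μ | μ ∈ (q 0).roots} from h)
        · exact Or.inr (show μ ∈ {μ | μ ∈ (q 1).roots} from h)
      · intro μ hμ; exact Multiset.mem_toFinset.mpr hμ
      · intro μ hμ; exact Multiset.mem_toFinset.mpr hμ
    set Sa : Set ↥K := {x | (x:ℂ) ∈ F ∧ (x:ℂ) ∈ T} with hSadef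
    set Sb : Set ↥K := {x | (x:ℂ) ∈ F ∧ (x:ℂ) ∉ T} with hSbdef
    have hSafin : Sa.Finite :=
      ((hFfin.preimage (Set.injOn_of_injective Subtype.val_injective)).subset
        (fun x hx => hx.1))
    have hSbfin : Sb.Finite :=
      ((hFfin.preimage (Set.injOn_of_injective Subtype.val_injective)).subset
        (fun x hx => hx.1))
    set U' : ↥K → ↥K → Set ↥K := fun a b =>
      if h : ((a:ℂ) ∈ T ∧ (b:ℂ) ∉ T) then (hsep a b h.1 h.2).choose else Set.univ with hU'def
    have hU'clopen : ∀ a b, IsClopen (U' a b) := by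
      intro a b
      simp only [hU'def]
      split
      · exact (hsep a b (by assumption : (a:ℂ) ∈ T ∧ (b:ℂ) ∉ T).1
          (by assumption : (a:ℂ) ∈ T ∧ (b:ℂ) ∉ T).2).choose_spec.1
      · exact isClopen_univ
    have hU'a : ∀ (a b : ↥K) (h : (a:ℂ) ∈ T ∧ (b:ℂ) ∉ T), a ∈ U' a b := by
      intro a b h
      simp only [hU'def, dif_pos h]
      exact (hsep a b h.1 h.2).choose_spec.2.1
    have hU'b : ∀ (a b : ↥K) (h : (a:ℂ) ∈ T ∧ (b:ℂ) ∉ T), b ∉ U' a b := by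
      intro a b h
      simp only [hU'def, dif_pos h]
      exact (hsep a b h.1 h.2).choose_spec.2.2
    refine ⟨⋃ a ∈ Sa, ⋂ b ∈ Sb, U' a b, ?_, ?_⟩
    · exact hSafin.isClopen_biUnion fun a _ =>
        hSbfin.isClopen_biInter fun b _ => hU'clopen a b
    · intro x hx
      have hxF : (x:ℂ) ∈ F := hx
      constructor
      · intro hxT
        apply Set.mem_biUnion (show x ∈ Sa from ⟨hxF, hxT⟩)
        apply Set.mem_biInter
        intro b hb
        exact hU'a x b ⟨hxT, hb.2⟩
      · intro hxV
        by_contra hxT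
        obtain ⟨a, haSa, hxInter⟩ := Set.mem_iUnion₂.mp hxV
        have := Set.mem_iInter₂.mp hxInter x ⟨hxF, hxT⟩
        exact hU'b a x ⟨haSa.2, hxT⟩ this
  obtain ⟨O₁, hO₁, hVeq₁⟩ : ∃ O : Set ℂ, IsOpen O ∧ V = Subtype.val ⁻¹' O :=
    ⟨_, (isOpen_induced_iff.mp hVclopen.isOpen).choose_spec.1,
      ((isOpen_induced_iff.mp hVclopen.isOpen).choose_spec.2).symm⟩
  obtain ⟨O₂, hO₂, hVeq₂⟩ : ∃ O : Set ℂ, IsOpen O ∧ Vᶜ = Subtype.val ⁻¹' O :=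
    ⟨_, (isOpen_induced_iff.mp hVclopen.compl.isOpen).choose_spec.1,
      ((isOpen_induced_iff.mp hVclopen.compl.isOpen).choose_spec.2).symm⟩
  set P : ℂ → Prop := fun μ => ∃ h : μ ∈ K, (⟨μ, h⟩ : ↥K) ∈ V with hPdef
  have hPO₁ : ∀ μ (h : μ ∈ K), (P μ ↔ μ ∈ O₁) := by
    intro μ h
    constructor
    · rintro ⟨h', hV⟩
      rw [hVeq₁] at hV
      exact hV
    · intro hO
      refine ⟨h, ?_⟩
      rw [hVeq₁]
      exact hO
  have hPO₂ : ∀ μ (h : μ ∈ K), (¬ P μ ↔ μ ∈ O₂) := by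
    intro μ h
    constructor
    · intro hP
      have hVc : (⟨μ, h⟩ : ↥K) ∈ Vᶜ := fun hV => hP ⟨h, hV⟩
      rw [hVeq₂] at hVc
      exact hVc
    · intro hO hP
      obtain ⟨h', hV⟩ := hP
      have hVc : (⟨μ, h⟩ : ↥K) ∈ Vᶜ := by rw [hVeq₂]; exact hO
      exact hVc hV
  -- the counting function
  set f : ℝ → ℕ := fun t => Multiset.card ((q t).roots.filter P) with hfdef
  -- local constancy
  have hloc : ∀ t0 ∈ Icc (0:ℝ) 1, ∃ δ > (0:ℝ),
      ∀ t ∈ Icc (0:ℝ) 1, |t - t0| < δ → f t = f t0 := by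
    intro t0 ht0
    by_contra hcon
    push_neg at hcon
    choose tt htt1 htt2 htt3 using fun k : ℕ =>
      hcon (1 / ((k : ℝ) + 1)) (by positivity)
    have httconv : Tendsto tt atTop (𝓝 t0) := by
      rw [tendsto_iff_dist_tendsto_zero]
      exact squeeze_zero (fun k => dist_nonneg)
        (fun k => le_of_lt (by rw [Real.dist_eq]; exact htt2 k))
        tendsto_one_div_add_atTop_nhds_zero_nat
    have hcard : ∀ t : ℝ, Multiset.card (q t).roots = n := fun t => by
      rw [MCAux3.roots_card_eq (hmon t), hdeg t]
    choose v hv using fun k : ℕ => MCAux3.exists_ofFn n (q (tt k)).roots (hcard (tt k))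
    have hcoe : ∀ j, Tendsto (fun k => (q (tt k)).coeff j) atTop (𝓝 ((q t0).coeff j)) :=
      fun j => ((hcont j).continuousAt.tendsto).comp httconv
    have hRseq : ∀ k x, x ∈ (q (tt k)).roots → ‖x‖ ≤ R :=
      fun k x hx => hRt (tt k) (htt1 k) x (Polynomial.isRoot_of_mem_roots hx)
    obtain ⟨φ, hφ, w, hw, hconv⟩ := MCAux3.core (fun k => hmon (tt k)) (hmon t0) hcoe hRseq
      (fun k => hdeg (tt k)) v hv
    have hwK : ∀ i, w i ∈ K := by
      intro i
      refine ⟨t0, ht0, ?_⟩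
      apply Polynomial.isRoot_of_mem_roots
      rw [hw]
      exact Multiset.mem_coe.mpr (List.mem_ofFn.mpr ⟨i, rfl⟩)
    have hvK : ∀ k i, v k i ∈ K := by
      intro k i
      refine ⟨tt k, htt1 k, ?_⟩
      apply Polynomial.isRoot_of_mem_roots
      rw [hv k]
      exact Multiset.mem_coe.mpr (List.mem_ofFn.mpr ⟨i, rfl⟩)
    have hev : ∀ i : Fin n, ∀ᶠ k in atTop, (P (v (φ k) i) ↔ P (w i)) := by
      intro i
      by_cases hPw : P (w i)
      · have hO : w i ∈ O₁ := (hPO₁ (w i) (hwK i)).mp hPw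
        filter_upwards [(hconv i).eventually (hO₁.mem_nhds hO)] with k hk
        simp only [hPw, iff_true]
        exact (hPO₁ _ (hvK (φ k) i)).mpr hk
      · have hO : w i ∈ O₂ := (hPO₂ (w i) (hwK i)).mp hPw
        filter_upwards [(hconv i).eventually (hO₂.mem_nhds hO)] with k hk
        simp only [hPw, iff_false]
        exact (hPO₂ _ (hvK (φ k) i)).mpr hk
    obtain ⟨k, hk⟩ := (eventually_all.mpr hev).exists
    apply htt3 (φ k)
    have hfk : f (tt (φ k)) = (Finset.univ.filter fun i => P (v (φ k) i)).card := by
      simp only [hfdef]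
      rw [hv (φ k)]
      exact MCAux4.card_filter_ofFn _ _
    have hft0 : f t0 = (Finset.univ.filter fun i => P (w i)).card := by
      simp only [hfdef]
      rw [hw]
      exact MCAux4.card_filter_ofFn _ _
    rw [hfk, hft0]
    congr 1
    apply Finset.filter_congr
    intro i _
    simpa using hk i
  -- conclude constancy on [0,1]
  have hconst : f 1 = f 0 := by
    haveI : PreconnectedSpace ↥(Icc (0:ℝ) 1) := Subtype.preconnectedSpace isPreconnected_Icc
    have hlc : IsLocallyConstant (fun t : ↥(Icc (0:ℝ) 1) => f ↑t) := by
      rw [IsLocallyConstant.iff_eventually_eq]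
      intro x
      obtain ⟨δ, hδ, hδ'⟩ := hloc ↑x x.2
      have hmem : Subtype.val ⁻¹' Metric.ball (x:ℝ) δ ∈ 𝓝 x :=
        continuous_subtype_val.continuousAt.preimage_mem_nhds (Metric.ball_mem_nhds _ hδ)
      filter_upwards [hmem] with y hy
      exact hδ' ↑y y.2 (by rw [← Real.dist_eq]; exact hy)
    exact hlc.apply_eq_of_preconnectedSpace ⟨1, by norm_num⟩ ⟨0, by norm_num⟩
  -- translate the goal
  have key : ∀ t ∈ Icc (0:ℝ) 1, (∀ μ ∈ (q t).roots, (μ ∈ (q 0).roots ∨ μ ∈ (q 1).roots)) →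
      ∑ ζ ∈ (q t).roots.toFinset.filter (fun ζ => ζ ∈ T), (q t).rootMultiplicity ζ = f t := by
    intro t ht hor
    have hcongr : (q t).roots.filter (fun ζ => ζ ∈ T) = (q t).roots.filter P := by
      apply Multiset.filter_congr
      intro μ hμ
      have hμK : μ ∈ K := hrootsK t ht μ hμ
      have hiff := hVmem ⟨μ, hμK⟩ (hor μ hμ)
      simp only [hPdef]
      constructor
      · intro hμT
        exact ⟨hμK, hiff.mp hμT⟩
      · rintro ⟨h', hV⟩
        exact hiff.mpr hV
    calc ∑ ζ ∈ (q t).roots.toFinset.filter (fun ζ => ζ ∈ T), (q t).rootMultiplicity ζ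
        = ∑ ζ ∈ (q t).roots.toFinset.filter (fun ζ => ζ ∈ T), (q t).roots.count ζ := by
          apply Finset.sum_congr rfl; intro ζ _; rw [Polynomial.count_roots]
      _ = Multiset.card ((q t).roots.filter (fun ζ => ζ ∈ T)) :=
          MCAux4.sum_count_eq_card_filter _ _
      _ = f t := by rw [hcongr]
  have h1 := key 1 (by norm_num) (fun μ hμ => Or.inr hμ)
  have h0 := key 0 (by norm_num) (fun μ hμ => Or.inl hμ)
  rw [hq1] at h1
  rw [hq0] at h0
  rw [h1, h0, hconst]
end

section
/- Let A ∈ ℂ^{n×n} and ε > 0 be such that the strict structured ε-pseudospectrum Λ'_{S,ε}(A) has exactly n connected components. Then for every z ∈ ℂ^s with ‖z‖ < ε, all eigenvalues of A + M_S(z) are simple (algebraic multiplicity 1). -/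
open Matrix Polynomial Set
open scoped Classical

lemma charpoly_eval_eq_det {m : ℕ} (M : Matrix (Fin m) (Fin m) ℂ) (x : ℂ) :
    M.charpoly.eval x = (Matrix.scalar (Fin m) x - M).det := by
  rw [Matrix.charpoly, eval_det, matPolyEquiv_charmatrix]
  simp

lemma mem_spectrum_iff_root {m : ℕ} (M : Matrix (Fin m) (Fin m) ℂ) (x : ℂ) :
    x ∈ spectrum ℂ M ↔ M.charpoly.IsRoot x := by
  rw [spectrum.mem_iff, Matrix.isUnit_iff_isUnit_det, isUnit_iff_ne_zero, not_ne_iff,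
    IsRoot, charpoly_eval_eq_det]
  rw [Matrix.scalar_apply, show (algebraMap ℂ (Matrix (Fin m) (Fin m) ℂ)) x
    = Matrix.diagonal (fun _ => x) by rw [Matrix.algebraMap_eq_diagonal]; rfl]

lemma charpoly_coeff_continuous {m : ℕ} {α : Type*} [TopologicalSpace α]
    (f : α → Matrix (Fin m) (Fin m) ℂ) (hf : ∀ i j, Continuous fun a => f a i j) (k : ℕ) :
    Continuous fun a => (f a).charpoly.coeff k := by
  set Xm : Matrix (Fin m) (Fin m) (MvPolynomial (Fin m × Fin m) ℂ) :=
    fun i j => MvPolynomial.X (i, j) with hXm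
  have key : ∀ M : Matrix (Fin m) (Fin m) ℂ,
      M.charpoly.coeff k
        = MvPolynomial.eval (fun p : Fin m × Fin m => M p.1 p.2) (Xm.charpoly.coeff k) := by
    intro M
    have h1 : Xm.map (MvPolynomial.eval (fun p : Fin m × Fin m => M p.1 p.2)) = M := by
      ext i j; rw [Matrix.map_apply]; simp [hXm]
    calc M.charpoly.coeff k
        = ((Xm.map (MvPolynomial.eval fun p : Fin m × Fin m => M p.1 p.2)).charpoly).coeff k := by
          rw [h1]
      _ = _ := by
          rw [Matrix.charpoly_map, Polynomial.coeff_map]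
  simp only [key]
  exact (MvPolynomial.continuous_eval (p := Xm.charpoly.coeff k)).comp
    (continuous_pi fun p : Fin m × Fin m => hf p.1 p.2)

/-- Cauchy bound: any root of a monic polynomial is bounded by max 1 (sum of coeff norms). -/
lemma monic_root_bound (q : ℂ[X]) (hq : q.Monic) (x : ℂ) (hx : q.IsRoot x) :
    ‖x‖ ≤ max 1 (∑ i ∈ Finset.range q.natDegree, ‖q.coeff i‖) := by
  rcases le_or_gt ‖x‖ 1 with h1 | h1
  · exact le_max_of_le_left h1
  · refine le_max_of_le_right ?_
    set m := q.natDegree with hm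
    have hm0 : m ≠ 0 := by
      intro h
      have : q = 1 := hq.natDegree_eq_zero.mp h
      simp [this, IsRoot] at hx
    obtain ⟨k, hk⟩ : ∃ k, m = k + 1 :=
      ⟨m - 1, (Nat.succ_pred_eq_of_pos (Nat.pos_of_ne_zero hm0)).symm⟩
    have heval : q.eval x = ∑ i ∈ Finset.range (m + 1), q.coeff i * x ^ i := by
      rw [eval_eq_sum_range]
    have hsum : x ^ m + ∑ i ∈ Finset.range m, q.coeff i * x ^ i = 0 := by
      have := hx
      rw [IsRoot, heval, Finset.sum_range_succ] at this
      rw [hq.coeff_natDegree] at this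
      linear_combination this
    have hxm : ‖x ^ m‖ ≤ ∑ i ∈ Finset.range m, ‖q.coeff i‖ * ‖x‖ ^ i := by
      have : x ^ m = -∑ i ∈ Finset.range m, q.coeff i * x ^ i := by linear_combination hsum
      rw [this, norm_neg]
      refine (norm_sum_le _ _).trans ?_
      refine Finset.sum_le_sum fun i _ => ?_
      rw [norm_mul, norm_pow]
    have hbound : ∀ i ∈ Finset.range m, ‖q.coeff i‖ * ‖x‖ ^ i ≤ ‖q.coeff i‖ * ‖x‖ ^ k := by
      intro i hi
      have hik : i ≤ k := by have := Finset.mem_range.mp hi; omega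
      exact mul_le_mul_of_nonneg_left (pow_le_pow_right₀ (le_of_lt h1) hik) (norm_nonneg _)
    have h2 : ‖x‖ ^ m ≤ (∑ i ∈ Finset.range m, ‖q.coeff i‖) * ‖x‖ ^ k := by
      rw [← norm_pow]
      refine hxm.trans ?_
      rw [Finset.sum_mul]
      exact Finset.sum_le_sum hbound
    have hxk : (0:ℝ) < ‖x‖ ^ k := pow_pos (lt_trans one_pos h1) k
    have hmul : ‖x‖ * ‖x‖ ^ k ≤ (∑ i ∈ Finset.range m, ‖q.coeff i‖) * ‖x‖ ^ k := by
      have hpow : ‖x‖ * ‖x‖ ^ k = ‖x‖ ^ m := by rw [hk, pow_succ']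
      rw [hpow]
      exact h2
    exact le_of_mul_le_mul_right hmul hxk

/-- Nearest-root bound: `dist(x, roots q)^n ≤ |q(x)|` for monic `q` of degree `n ≥ 1`. -/
lemma exists_root_near (q : ℂ[X]) (hq : q.Monic) {m : ℕ} (hdeg : q.natDegree = m) (hm : 0 < m)
    (x : ℂ) : ∃ r ∈ q.roots, ‖x - r‖ ^ m ≤ ‖q.eval x‖ := by
  have hsplits : q.Splits := IsAlgClosed.splits q
  have hcard : q.roots.card = m := by
    rw [← hdeg]; exact (splits_iff_card_roots.mp hsplits)
  have hne : q.roots.toFinset.Nonempty := by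
    rw [Multiset.toFinset_nonempty]
    intro h
    rw [h] at hcard; simp at hcard; omega
  obtain ⟨r₀, hr₀mem, hr₀min⟩ := q.roots.toFinset.exists_min_image (fun r => ‖x - r‖) hne
  refine ⟨r₀, Multiset.mem_toFinset.mp hr₀mem, ?_⟩
  have hfact : q = (q.roots.map fun a => X - C a).prod := hsplits.eq_prod_roots_of_monic hq
  have heval : q.eval x = (q.roots.map fun a => x - a).prod := by
    conv_lhs => rw [hfact]
    rw [eval_multiset_prod, Multiset.map_map]
    congr 1
    ext a
    simp
  have nnprod : ∀ s : Multiset ℂ, ‖s.prod‖₊ = (s.map fun y => ‖y‖₊).prod := by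
    intro s
    induction s using Multiset.induction_on with
    | empty => simp
    | cons a s ih => simp [nnnorm_mul, ih]
  have hnn : ‖q.eval x‖₊ = (q.roots.map fun a => ‖x - a‖₊).prod := by
    rw [heval, nnprod, Multiset.map_map]
    rfl
  have hge : (‖x - r₀‖₊) ^ m ≤ ‖q.eval x‖₊ := by
    rw [hnn]
    have := Multiset.pow_card_le_prod (s := q.roots.map fun a => ‖x - a‖₊) (a := ‖x - r₀‖₊) ?_
    · rwa [Multiset.card_map, hcard] at this
    · intro y hy
      obtain ⟨a, ha, rfl⟩ := Multiset.mem_map.mp hy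
      exact_mod_cast hr₀min a (Multiset.mem_toFinset.mpr ha)
  rw [← coe_nnnorm (x - r₀), ← coe_nnnorm (q.eval x), ← NNReal.coe_pow, NNReal.coe_le_coe]
  exact hge

/-- Evaluation difference bound. -/
lemma eval_diff_bound (p q : ℂ[X]) {m : ℕ} (hp : p.natDegree ≤ m) (hqd : q.natDegree ≤ m)
    (x : ℂ) :
    ‖p.eval x - q.eval x‖ ≤ ∑ i ∈ Finset.range (m + 1), ‖p.coeff i - q.coeff i‖ * ‖x‖ ^ i := by
  have hp' : p.eval x = ∑ i ∈ Finset.range (m + 1), p.coeff i * x ^ i :=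
    eval_eq_sum_range' (Nat.lt_succ_of_le hp) x
  have hq' : q.eval x = ∑ i ∈ Finset.range (m + 1), q.coeff i * x ^ i :=
    eval_eq_sum_range' (Nat.lt_succ_of_le hqd) x
  rw [hp', hq', ← Finset.sum_sub_distrib]
  refine (norm_sum_le _ _).trans (Finset.sum_le_sum fun i _ => ?_)
  rw [← sub_mul, norm_mul, norm_pow]

/-- If the strict structured ε-pseudospectrum has exactly `n` connected components, then every
matrix `A + M_S(z)` with `‖z‖ < ε` has only simple eigenvalues. -/
theorem simple_eigenvalues_of_n_components {n : ℕ} (A : Matrix (Fin n) (Fin n) ℂ)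
    (S : Finset (Fin n × Fin n)) (ε : ℝ) (hε : 0 < ε)
    (hcomp : {T : Set ℂ | ∃ w ∈ structPseudoStrict A S ε,
        T = connectedComponentIn (structPseudoStrict A S ε) w}.ncard = n) :
    ∀ z : EuclideanSpace ℂ {p : Fin n × Fin n // p ∈ S}, ‖z‖ < ε →
      ∀ ξ ∈ spectrum ℂ (A + MS S z),
        (A + MS S z).charpoly.rootMultiplicity ξ = 1 := by
  intro z hz ξ hξ
  rcases Nat.eq_zero_or_pos n with hn0 | hn
  · exfalso
    subst hn0
    rw [spectrum.mem_iff] at hξ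
    exact hξ (isUnit_of_subsingleton _)
  set Λ := structPseudoStrict A S ε with hΛ
  have hmemΛ : ∀ x : ℂ, x ∈ Λ ↔
      ∃ z' : EuclideanSpace ℂ {p : Fin n × Fin n // p ∈ S},
        ‖z'‖ < ε ∧ x ∈ spectrum ℂ (A + MS S z') := by
    intro x
    simp [hΛ, structPseudoStrict, Set.mem_iUnion, Set.mem_setOf_eq]
  have hq_monic : ∀ z', (A + MS S z').charpoly.Monic := fun z' => Matrix.charpoly_monic _
  have hq_deg : ∀ z', (A + MS S z').charpoly.natDegree = n := by
    intro z'
    rw [Matrix.charpoly_natDegree_eq_dim, Fintype.card_fin]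
  have hcont : ∀ k, Continuous fun z' : EuclideanSpace ℂ {p : Fin n × Fin n // p ∈ S} =>
      (A + MS S z').charpoly.coeff k := by
    intro k
    refine charpoly_coeff_continuous _ (fun i j => ?_) k
    simp only [Matrix.add_apply, MS]
    by_cases h : (i, j) ∈ S
    · simp only [h, dif_pos]
      exact continuous_const.add
        ((EuclideanSpace.proj (⟨(i, j), h⟩ : {p : Fin n × Fin n // p ∈ S})).continuous)
    · simp only [h, dif_neg, not_false_iff]
      exact continuous_const
  have hspecΛ : ∀ z', ‖z'‖ < ε → spectrum ℂ (A + MS S z') ⊆ Λ := by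
    intro z' h x hx
    exact (hmemΛ x).mpr ⟨z', h, hx⟩
  set comps := {T : Set ℂ | ∃ w ∈ Λ, T = connectedComponentIn Λ w} with hcomps
  have hfin : comps.Finite := by
    by_contra h
    rw [Set.Infinite.ncard h] at hcomp
    omega
  have hclosedT : ∀ T ∈ comps, IsClosed ((Subtype.val) ⁻¹' T : Set Λ) := by
    rintro T ⟨w, hw, rfl⟩
    rw [connectedComponentIn_eq_image hw, Set.preimage_image_eq _ Subtype.val_injective]
    exact isClosed_connectedComponent
  have key : ∀ w ∈ Λ, ∃ ξ' ∈ spectrum ℂ (A + MS S z), ξ' ∈ connectedComponentIn Λ w := by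
    intro w hw
    set C := connectedComponentIn Λ w with hC
    have hCcomp : C ∈ comps := ⟨w, hw, rfl⟩
    have hCsub : C ⊆ Λ := connectedComponentIn_subset _ _
    have hCclosed := hclosedT C hCcomp
    obtain ⟨U', hU'open, hU'⟩ := isOpen_induced_iff.mp hCclosed.isOpen_compl
    have hU'spec : ∀ x (hx : x ∈ Λ), (x ∈ U' ↔ x ∉ C) := by
      intro x hx
      have := Set.ext_iff.mp hU' ⟨x, hx⟩
      simpa using this
    have hCopen : IsOpen ((Subtype.val) ⁻¹' C : Set Λ) := by
      have hcompl : ((Subtype.val) ⁻¹' C : Set Λ)ᶜ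
          = ⋃ T ∈ comps \ {C}, ((Subtype.val) ⁻¹' T : Set Λ) := by
        ext x
        simp only [Set.mem_compl_iff, Set.mem_preimage, Set.mem_iUnion, exists_prop,
          Set.mem_diff, Set.mem_singleton_iff]
        constructor
        · intro hx
          refine ⟨connectedComponentIn Λ ↑x, ⟨⟨↑x, x.2, rfl⟩, ?_⟩, mem_connectedComponentIn x.2⟩
          intro h
          exact hx (h ▸ mem_connectedComponentIn x.2)
        · rintro ⟨T, ⟨⟨wT, hwT, rfl⟩, hTne⟩, hxT⟩ hxC
          refine hTne ?_
          rw [hC]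
          rw [connectedComponentIn_eq hxT, ← connectedComponentIn_eq hxC]
      rw [← isClosed_compl_iff, hcompl]
      exact Set.Finite.isClosed_biUnion (hfin.subset Set.diff_subset)
        fun T hT => hclosedT T hT.1
    obtain ⟨U, hUopen, hU⟩ := isOpen_induced_iff.mp hCopen
    have hUspec : ∀ x (hx : x ∈ Λ), (x ∈ U ↔ x ∈ C) := by
      intro x hx
      have := Set.ext_iff.mp hU ⟨x, hx⟩
      simpa using this
    set V₁ := {z' : EuclideanSpace ℂ {p : Fin n × Fin n // p ∈ S} |
      ‖z'‖ < ε ∧ ∃ ξ' ∈ spectrum ℂ (A + MS S z'), ξ' ∈ C} with hV₁def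
    set V₂ := {z' : EuclideanSpace ℂ {p : Fin n × Fin n // p ∈ S} |
      ‖z'‖ < ε ∧ ∀ ξ' ∈ spectrum ℂ (A + MS S z'), ξ' ∉ C} with hV₂def
    have hV₁ : IsOpen V₁ := by
      rw [isOpen_iff_forall_mem_open]
      rintro z₀ ⟨hz₀, ξ₀, hξ₀spec, hξ₀C⟩
      have hξ₀U : ξ₀ ∈ U := (hUspec ξ₀ (hCsub hξ₀C)).mpr hξ₀C
      obtain ⟨δ, hδ, hball⟩ := Metric.isOpen_iff.mp hUopen ξ₀ hξ₀U
      have hδn : 0 < δ ^ n := pow_pos hδ n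
      have hgev : Continuous fun z' : EuclideanSpace ℂ {p : Fin n × Fin n // p ∈ S} =>
          (A + MS S z').charpoly.eval ξ₀ := by
        have hrepr : ∀ z', (A + MS S z').charpoly.eval ξ₀
            = ∑ i ∈ Finset.range (n + 1), (A + MS S z').charpoly.coeff i * ξ₀ ^ i := by
          intro z'
          exact eval_eq_sum_range' (by rw [hq_deg]; omega) ξ₀
        simp only [hrepr]
        exact continuous_finset_sum _ fun i _ => (hcont i).mul continuous_const
      have h0 : (A + MS S z₀).charpoly.eval ξ₀ = 0 := (mem_spectrum_iff_root _ _).mp hξ₀spec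
      obtain ⟨η, hη, hηs⟩ := Metric.continuous_iff.mp hgev z₀ (δ ^ n) hδn
      have hεz₀ : 0 < ε - ‖z₀‖ := by linarith
      refine ⟨Metric.ball z₀ (min η (ε - ‖z₀‖)), ?_, Metric.isOpen_ball,
        Metric.mem_ball_self (lt_min hη hεz₀)⟩
      intro z' hz'
      have hd := Metric.mem_ball.mp hz'
      have hz'ε : ‖z'‖ < ε := by
        have h1 : dist z' z₀ < ε - ‖z₀‖ := lt_of_lt_of_le hd (min_le_right _ _)
        have h2 : ‖z'‖ - ‖z₀‖ ≤ ‖z' - z₀‖ := norm_sub_norm_le z' z₀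
        rw [dist_eq_norm] at h1
        linarith
      have heval_small : ‖(A + MS S z').charpoly.eval ξ₀‖ < δ ^ n := by
        have h1 := hηs z' (lt_of_lt_of_le hd (min_le_left _ _))
        rwa [h0, dist_zero_right] at h1
      obtain ⟨r, hrmem, hrle⟩ := exists_root_near _ (hq_monic z') (hq_deg z') hn ξ₀
      have hrδ : ‖ξ₀ - r‖ < δ :=
        lt_of_pow_lt_pow_left₀ n (le_of_lt hδ) (lt_of_le_of_lt hrle heval_small)
      have hrspec : r ∈ spectrum ℂ (A + MS S z') :=
        (mem_spectrum_iff_root _ _).mpr (isRoot_of_mem_roots hrmem)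
      have hrΛ : r ∈ Λ := hspecΛ z' hz'ε hrspec
      have hrU : r ∈ U := hball (by rw [Metric.mem_ball, dist_eq_norm, norm_sub_rev]; exact hrδ)
      exact ⟨hz'ε, r, hrspec, (hUspec r hrΛ).mp hrU⟩
    have hV₂ : IsOpen V₂ := by
      rw [isOpen_iff_forall_mem_open]
      rintro z₀ ⟨hz₀, hz₀C⟩
      set q₀ := (A + MS S z₀).charpoly with hq₀def
      have hq₀deg : q₀.natDegree = n := hq_deg z₀
      have hcard : Multiset.card q₀.roots = n := by
        rw [← hq₀deg]
        exact splits_iff_card_roots.mp (IsAlgClosed.splits q₀)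
      have hRne : q₀.roots.toFinset.Nonempty := by
        rw [Multiset.toFinset_nonempty]
        intro h
        rw [h] at hcard; simp at hcard; omega
      have hrootU' : ∀ r ∈ q₀.roots.toFinset, r ∈ U' := by
        intro r hr
        have hrspec : r ∈ spectrum ℂ (A + MS S z₀) :=
          (mem_spectrum_iff_root _ _).mpr (isRoot_of_mem_roots (Multiset.mem_toFinset.mp hr))
        exact (hU'spec r (hspecΛ z₀ hz₀ hrspec)).mpr (hz₀C r hrspec)
      have hdelta : ∀ r : ℂ, ∃ d : ℝ, 0 < d ∧ (r ∈ U' → Metric.ball r d ⊆ U') := by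
        intro r
        by_cases h : r ∈ U'
        · obtain ⟨d, hd, hsub⟩ := Metric.isOpen_iff.mp hU'open r h
          exact ⟨d, hd, fun _ => hsub⟩
        · exact ⟨1, one_pos, fun h' => absurd h' h⟩
      choose δf hδfpos hδfsub using hdelta
      set δ := q₀.roots.toFinset.inf' hRne δf with hδdef
      have hδpos : 0 < δ := by
        rw [hδdef, Finset.lt_inf'_iff]
        intro r _
        exact hδfpos r
      set B := max 1 (∑ i ∈ Finset.range n, (‖q₀.coeff i‖ + 1)) with hBdef
      have hB1 : (1 : ℝ) ≤ B := le_max_left _ _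
      set κ := min 1 (δ ^ n / (2 * (n + 1) * B ^ n)) with hκdef
      have hκpos : 0 < κ := lt_min one_pos (by positivity)
      have hκ1 : κ ≤ 1 := min_le_left _ _
      set W := Metric.ball z₀ (ε - ‖z₀‖) ∩
        ⋂ i ∈ Finset.range (n + 1),
          {z' : EuclideanSpace ℂ {p : Fin n × Fin n // p ∈ S} |
            ‖(A + MS S z').charpoly.coeff i - q₀.coeff i‖ < κ} with hWdef
      have hWopen : IsOpen W := by
        refine Metric.isOpen_ball.inter (isOpen_biInter_finset fun i _ => ?_)
        have hset : {z' : EuclideanSpace ℂ {p : Fin n × Fin n // p ∈ S} |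
            ‖(A + MS S z').charpoly.coeff i - q₀.coeff i‖ < κ}
            = (fun z' => (A + MS S z').charpoly.coeff i) ⁻¹' Metric.ball (q₀.coeff i) κ := by
          ext z'
          simp [Metric.mem_ball, dist_eq_norm]
        rw [hset]
        exact (hcont i).isOpen_preimage _ Metric.isOpen_ball
      have hz₀W : z₀ ∈ W := by
        refine ⟨Metric.mem_ball_self (by linarith), ?_⟩
        rw [Set.mem_iInter₂]
        intro i _
        simpa [hq₀def] using hκpos
      refine ⟨W, ?_, hWopen, hz₀W⟩
      rintro z' ⟨hz'ball, hz'coef⟩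
      have hz'ε : ‖z'‖ < ε := by
        have h1 : dist z' z₀ < ε - ‖z₀‖ := Metric.mem_ball.mp hz'ball
        have h2 : ‖z'‖ - ‖z₀‖ ≤ ‖z' - z₀‖ := norm_sub_norm_le z' z₀
        rw [dist_eq_norm] at h1
        linarith
      have hcoef : ∀ i ∈ Finset.range (n + 1),
          ‖(A + MS S z').charpoly.coeff i - q₀.coeff i‖ < κ := by
        intro i hi
        exact Set.mem_iInter₂.mp hz'coef i hi
      refine ⟨hz'ε, ?_⟩
      intro ξ' hξ'spec hξ'C
      have hξ'root : (A + MS S z').charpoly.IsRoot ξ' := (mem_spectrum_iff_root _ _).mp hξ'spec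
      have hsumB : ∑ i ∈ Finset.range ((A + MS S z').charpoly.natDegree),
          ‖(A + MS S z').charpoly.coeff i‖ ≤ B := by
        rw [hq_deg]
        refine le_trans (Finset.sum_le_sum fun i hi => ?_) (le_max_right _ _)
        have hi' : i ∈ Finset.range (n + 1) := by
          simp only [Finset.mem_range] at hi ⊢; omega
        have h := hcoef i hi'
        have heq : (A + MS S z').charpoly.coeff i
            = q₀.coeff i + ((A + MS S z').charpoly.coeff i - q₀.coeff i) := by ring
        calc ‖(A + MS S z').charpoly.coeff i‖
            ≤ ‖q₀.coeff i‖ + ‖(A + MS S z').charpoly.coeff i - q₀.coeff i‖ := by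
              conv_lhs => rw [heq]
              exact norm_add_le _ _
          _ ≤ ‖q₀.coeff i‖ + 1 := by
              have := lt_of_lt_of_le h hκ1
              linarith
      have hξ'B : ‖ξ'‖ ≤ B :=
        le_trans (monic_root_bound _ (hq_monic z') ξ' hξ'root) (max_le hB1 hsumB)
      have hBn : ∀ i ∈ Finset.range (n + 1), ‖ξ'‖ ^ i ≤ B ^ n := by
        intro i hi
        calc ‖ξ'‖ ^ i ≤ B ^ i := pow_le_pow_left₀ (norm_nonneg _) hξ'B i
          _ ≤ B ^ n := pow_le_pow_right₀ hB1 (by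
              have := Finset.mem_range.mp hi; omega)
      have hevalb : ‖q₀.eval ξ'‖ < δ ^ n := by
        have hz'eval : (A + MS S z').charpoly.eval ξ' = 0 := hξ'root
        have h1 : ‖q₀.eval ξ' - (A + MS S z').charpoly.eval ξ'‖
            ≤ ∑ i ∈ Finset.range (n + 1),
              ‖q₀.coeff i - (A + MS S z').charpoly.coeff i‖ * ‖ξ'‖ ^ i :=
          eval_diff_bound _ _ (le_of_eq hq₀deg) (le_of_eq (hq_deg z')) ξ'
        have h2 : ∑ i ∈ Finset.range (n + 1),
            ‖q₀.coeff i - (A + MS S z').charpoly.coeff i‖ * ‖ξ'‖ ^ i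
            ≤ ∑ i ∈ Finset.range (n + 1), κ * B ^ n := by
          refine Finset.sum_le_sum fun i hi => ?_
          have ha : ‖q₀.coeff i - (A + MS S z').charpoly.coeff i‖ ≤ κ := by
            rw [norm_sub_rev]
            exact le_of_lt (hcoef i hi)
          exact mul_le_mul ha (hBn i hi) (pow_nonneg (norm_nonneg _) i)
            (le_of_lt hκpos)
        have h3 : ∑ i ∈ Finset.range (n + 1), κ * B ^ n = (n + 1) * (κ * B ^ n) := by
          rw [Finset.sum_const, Finset.card_range]
          push_cast
          ring
        have hκle : κ ≤ δ ^ n / (2 * (n + 1) * B ^ n) := min_le_right _ _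
        have hBnpos : (0 : ℝ) < B ^ n := pow_pos (lt_of_lt_of_le one_pos hB1) n
        have h4 : (n + 1 : ℝ) * (κ * B ^ n) ≤ δ ^ n / 2 := by
          have hκB : κ * B ^ n ≤ δ ^ n / (2 * (n + 1)) := by
            rw [div_mul_eq_div_div] at hκle
            calc κ * B ^ n ≤ (δ ^ n / (2 * (n + 1)) / B ^ n) * B ^ n := by
                  exact mul_le_mul_of_nonneg_right hκle (le_of_lt hBnpos)
              _ = δ ^ n / (2 * (n + 1)) := by field_simp
          calc (n + 1 : ℝ) * (κ * B ^ n) ≤ (n + 1 : ℝ) * (δ ^ n / (2 * (n + 1))) :=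
                mul_le_mul_of_nonneg_left hκB (by positivity)
            _ = δ ^ n / 2 := by field_simp
        have h5 : (0 : ℝ) < δ ^ n := pow_pos hδpos n
        calc ‖q₀.eval ξ'‖ = ‖q₀.eval ξ' - (A + MS S z').charpoly.eval ξ'‖ := by
              rw [hz'eval, sub_zero]
          _ ≤ (n + 1) * (κ * B ^ n) := by
              rw [← h3]; exact le_trans h1 h2
          _ ≤ δ ^ n / 2 := h4
          _ < δ ^ n := by linarith
      obtain ⟨r, hrmem, hrle⟩ := exists_root_near q₀ (hq_monic z₀) hq₀deg hn ξ'
      have hrδ : ‖ξ' - r‖ < δ :=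
        lt_of_pow_lt_pow_left₀ n (le_of_lt hδpos) (lt_of_le_of_lt hrle hevalb)
      have hrF : r ∈ q₀.roots.toFinset := Multiset.mem_toFinset.mpr hrmem
      have hδr : δ ≤ δf r := Finset.inf'_le _ hrF
      have hξ'U' : ξ' ∈ U' := hδfsub r (hrootU' r hrF)
        (by rw [Metric.mem_ball, dist_eq_norm]; exact lt_of_lt_of_le hrδ hδr)
      have hξ'Λ : ξ' ∈ Λ := hspecΛ z' hz'ε hξ'spec
      exact ((hU'spec ξ' hξ'Λ).mp hξ'U') hξ'C
    have hdisj : Disjoint V₁ V₂ := by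
      rw [Set.disjoint_left]
      rintro z' ⟨_, ξ', hs, hc⟩ ⟨_, h2⟩
      exact h2 ξ' hs hc
    have hcover : Metric.ball (0 : EuclideanSpace ℂ {p : Fin n × Fin n // p ∈ S}) ε
        ⊆ V₁ ∪ V₂ := by
      intro z' hz'
      rw [mem_ball_zero_iff] at hz'
      by_cases h : ∃ ξ' ∈ spectrum ℂ (A + MS S z'), ξ' ∈ C
      · exact Or.inl ⟨hz', h⟩
      · push_neg at h
        exact Or.inr ⟨hz', h⟩
    have hpre : IsPreconnected
        (Metric.ball (0 : EuclideanSpace ℂ {p : Fin n × Fin n // p ∈ S}) ε) :=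
      (convex_ball _ _).isPreconnected
    obtain ⟨zw, hzw, hwspec⟩ := (hmemΛ w).mp hw
    have hnon : (Metric.ball (0 : EuclideanSpace ℂ {p : Fin n × Fin n // p ∈ S}) ε
        ∩ V₁).Nonempty :=
      ⟨zw, mem_ball_zero_iff.mpr hzw, hzw, w, hwspec, mem_connectedComponentIn hw⟩
    have hsub := hpre.subset_left_of_subset_union hV₁ hV₂ hdisj hcover hnon
    exact (hsub (mem_ball_zero_iff.mpr hz)).2
  -- counting
  set R := (A + MS S z).charpoly.roots with hR
  have hcardR : Multiset.card R = n := by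
    have h := splits_iff_card_roots.mp
      (IsAlgClosed.splits (A + MS S z).charpoly)
    rw [hq_deg z] at h
    exact h
  have hsubset : comps ⊆ (fun r => connectedComponentIn Λ r) '' (R.toFinset : Set ℂ) := by
    rintro T ⟨w, hw, rfl⟩
    obtain ⟨ξ', hξ'spec, hξ'C⟩ := key w hw
    refine ⟨ξ', ?_, (connectedComponentIn_eq hξ'C).symm⟩
    rw [Finset.mem_coe, Multiset.mem_toFinset, hR, mem_roots']
    exact ⟨(hq_monic z).ne_zero, (mem_spectrum_iff_root _ _).mp hξ'spec⟩
  have hcub : n ≤ R.toFinset.card := by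
    calc n = comps.ncard := hcomp.symm
      _ ≤ ((fun r => connectedComponentIn Λ r) '' (R.toFinset : Set ℂ)).ncard :=
          Set.ncard_le_ncard hsubset ((R.toFinset : Set ℂ).toFinite.image _)
      _ ≤ (R.toFinset : Set ℂ).ncard := Set.ncard_image_le (R.toFinset : Set ℂ).toFinite
      _ = R.toFinset.card := Set.ncard_coe_finset _
  have hcardeq : R.toFinset.card = n :=
    le_antisymm (by rw [← hcardR]; exact Multiset.toFinset_card_le _) hcub
  have hsumcount : ∑ r ∈ R.toFinset, R.count r = n := by
    rw [Multiset.toFinset_sum_count_eq, hcardR]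
  have hξR : ξ ∈ R.toFinset := by
    rw [Multiset.mem_toFinset, hR, mem_roots']
    exact ⟨(hq_monic z).ne_zero, (mem_spectrum_iff_root _ _).mp hξ⟩
  have hcount1 : R.count ξ = 1 := by
    by_contra hne1
    have h2 : 2 ≤ R.count ξ := by
      have h1 : 1 ≤ R.count ξ :=
        Multiset.one_le_count_iff_mem.mpr (Multiset.mem_toFinset.mp hξR)
      omega
    have hrest : R.toFinset.card - 1 ≤ ∑ r ∈ R.toFinset.erase ξ, R.count r := by
      rw [← Finset.card_erase_of_mem hξR]
      calc (R.toFinset.erase ξ).card = ∑ _r ∈ R.toFinset.erase ξ, 1 := by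
            rw [Finset.sum_const, smul_eq_mul, mul_one]
        _ ≤ ∑ r ∈ R.toFinset.erase ξ, R.count r := by
            refine Finset.sum_le_sum fun r hr => ?_
            exact Multiset.one_le_count_iff_mem.mpr
              (Multiset.mem_toFinset.mp (Finset.mem_of_mem_erase hr))
    have hsum2 : ∑ r ∈ R.toFinset.erase ξ, R.count r + R.count ξ = n := by
      rw [Finset.sum_erase_add _ _ hξR]
      exact hsumcount
    omega
  rw [← Polynomial.count_roots]
  exact hcount1
end
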